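/- arXiv:2008.09984 — 7 statements merged into one kernel-verified Lean document; each statement's English description precedes it below -/
import Mathlib

section
/- For l ≥ 1 and n ≥ 2, A_l(n) satisfies the recursion A_l(n)·log n = l · Σ A_l(n/d^i)·log d, where the sum runs over all pairs (d, i) with d ≥ 2, i ≥ 1, and d^i dividing n, with boundary condition A_l(1) = 1. -/
/-- `A l n`: number of unordered factorizations of `n` into parts `≥ 2`
of at most `l` colors (multisets of (value, color) pairs, colors in `{0,…,l-1}`). -/
noncomputable def A (l n : ℕ) : ℕ :=
  Set.ncard {s : Multiset (ℕ × ℕ) |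
    (∀ p ∈ s, 2 ≤ p.1 ∧ p.2 < l) ∧ (s.map Prod.fst).prod = n}

/-- grid of possible parts -/
def pgrid (l n : ℕ) : Finset (ℕ × ℕ) := Finset.range (n+1) ×ˢ Finset.range l

/-- Finset of factorizations -/
def Fac (l n : ℕ) : Finset (Multiset (ℕ × ℕ)) :=
  ((n • (pgrid l n).val).powerset.toFinset).filter
    (fun s => (∀ p ∈ s, 2 ≤ p.1 ∧ p.2 < l) ∧ (s.map Prod.fst).prod = n)

lemma part_dvd {l n : ℕ} {s : Multiset (ℕ × ℕ)}
    (hprod : (s.map Prod.fst).prod = n) {a : ℕ × ℕ} (ha : a ∈ s) : a.1 ∣ n := by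
  rw [← hprod]
  exact Multiset.dvd_prod (Multiset.mem_map_of_mem _ ha)

lemma pow_count_dvd {l n : ℕ} {s : Multiset (ℕ × ℕ)}
    (hprod : (s.map Prod.fst).prod = n) (a : ℕ × ℕ) : a.1 ^ (s.count a) ∣ n := by
  rw [← hprod]
  have h1 : Multiset.replicate (s.count a) a ≤ s :=
    Multiset.le_count_iff_replicate_le.mp le_rfl
  have h2 := Multiset.prod_dvd_prod_of_le (Multiset.map_le_map (f := Prod.fst) h1)
  simpa [Multiset.map_replicate, Multiset.prod_replicate] using h2

lemma count_le_n {l n : ℕ} (hn : 1 ≤ n) {s : Multiset (ℕ × ℕ)}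
    (hparts : ∀ p ∈ s, 2 ≤ p.1 ∧ p.2 < l)
    (hprod : (s.map Prod.fst).prod = n) (a : ℕ × ℕ) : s.count a ≤ n := by
  by_cases ha : a ∈ s
  · have hd := (hparts a ha).1
    have hdvd := pow_count_dvd (l := l) hprod a
    have hle : a.1 ^ s.count a ≤ n := Nat.le_of_dvd hn hdvd
    have h2 : 2 ^ s.count a ≤ a.1 ^ s.count a := Nat.pow_le_pow_left hd _
    have := Nat.lt_two_pow_self (n := s.count a)
    omega
  · simp [Multiset.count_eq_zero_of_notMem ha]

lemma mem_pgrid {l n : ℕ} (hn : 1 ≤ n) {s : Multiset (ℕ × ℕ)}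
    (hparts : ∀ p ∈ s, 2 ≤ p.1 ∧ p.2 < l)
    (hprod : (s.map Prod.fst).prod = n) {a : ℕ × ℕ} (ha : a ∈ s) :
    a ∈ pgrid l n := by
  have h1 : a.1 ∣ n := part_dvd (l := l) hprod ha
  have h2 := (hparts a ha).2
  have : a.1 ≤ n := Nat.le_of_dvd hn h1
  simp only [pgrid, Finset.mem_product, Finset.mem_range]
  omega

lemma mem_Fac {l n : ℕ} (hn : 1 ≤ n) {s : Multiset (ℕ × ℕ)} :
    s ∈ Fac l n ↔ (∀ p ∈ s, 2 ≤ p.1 ∧ p.2 < l) ∧ (s.map Prod.fst).prod = n := by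
  constructor
  · exact fun h => (Finset.mem_filter.mp h).2
  · rintro ⟨hparts, hprod⟩
    refine Finset.mem_filter.mpr ⟨?_, hparts, hprod⟩
    rw [Multiset.mem_toFinset, Multiset.mem_powerset, Multiset.le_iff_count]
    intro a
    rw [Multiset.count_nsmul]
    by_cases ha : a ∈ s
    · have h1 : (pgrid l n).val.count a = 1 :=
        Multiset.count_eq_one_of_mem (pgrid l n).nodup (mem_pgrid hn hparts hprod ha)
      rw [h1, mul_one]
      exact count_le_n hn hparts hprod a
    · simp [Multiset.count_eq_zero_of_notMem ha]

lemma A_eq_card {l n : ℕ} (hn : 1 ≤ n) : A l n = (Fac l n).card := by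
  have : {s : Multiset (ℕ × ℕ) |
      (∀ p ∈ s, 2 ≤ p.1 ∧ p.2 < l) ∧ (s.map Prod.fst).prod = n} = ↑(Fac l n) := by
    ext s; simp [mem_Fac hn]
  rw [A, this, Set.ncard_coe_finset]

lemma A_one (l : ℕ) : A l 1 = 1 := by
  have : {s : Multiset (ℕ × ℕ) |
      (∀ p ∈ s, 2 ≤ p.1 ∧ p.2 < l) ∧ (s.map Prod.fst).prod = 1} = {(0 : Multiset (ℕ × ℕ))} := by
    ext s
    simp only [Set.mem_setOf_eq, Set.mem_singleton_iff]
    constructor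
    · rintro ⟨hparts, hprod⟩
      by_contra hs
      obtain ⟨a, ha⟩ := Multiset.exists_mem_of_ne_zero hs
      have := Nat.le_of_dvd one_pos (part_dvd (l := l) hprod ha)
      have := (hparts a ha).1
      omega
    · rintro rfl; simp
  rw [A, this, Set.ncard_singleton]


lemma log_multiset_prod (s : Multiset ℕ) (h : ∀ d ∈ s, 1 ≤ d) :
    Real.log (s.prod : ℕ) = (s.map fun d : ℕ => Real.log d).sum := by
  induction s using Multiset.induction with
  | empty => simp
  | cons a t ih =>
    have ha : 1 ≤ a := h a (Multiset.mem_cons_self a t)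
    have ht : ∀ d ∈ t, 1 ≤ d := fun d hd => h d (Multiset.mem_cons_of_mem hd)
    have hpos : 0 < t.prod := Multiset.prod_pos fun d hd => ht d hd
    rw [Multiset.prod_cons, Nat.cast_mul,
      Real.log_mul (by exact_mod_cast Nat.one_le_iff_ne_zero.mp ha)
        (by exact_mod_cast hpos.ne'), Multiset.map_cons, Multiset.sum_cons, ih ht]

lemma card_filter_count {l n d c i : ℕ} (hn : 1 ≤ n) (hd : 2 ≤ d) (hc : c < l)
    (hi : 1 ≤ i) (hdvd : d ^ i ∣ n) :
    ((Fac l n).filter (fun s => i ≤ s.count (d, c))).card = (Fac l (n / d ^ i)).card := by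
  have hdpos : 0 < d ^ i := Nat.pow_pos (by omega : 0 < d)
  have hq : 1 ≤ n / d ^ i := Nat.div_pos (Nat.le_of_dvd hn hdvd) hdpos
  apply Finset.card_bij (fun s _ => s - Multiset.replicate i (d, c))
  · intro s hs
    rw [Finset.mem_filter] at hs
    obtain ⟨hsF, hcount⟩ := hs
    rw [mem_Fac hn] at hsF
    obtain ⟨hparts, hprod⟩ := hsF
    have hrep : Multiset.replicate i (d, c) ≤ s :=
      Multiset.le_count_iff_replicate_le.mp hcount
    set t := s - Multiset.replicate i (d, c) with ht
    have hst : t + Multiset.replicate i (d, c) = s := tsub_add_cancel_of_le hrep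
    rw [mem_Fac hq]
    refine ⟨fun p hp => hparts p (Multiset.mem_of_le (Multiset.sub_le_self _ _) hp), ?_⟩
    have hps : ((t + Multiset.replicate i (d, c)).map Prod.fst).prod = n := by
      rw [hst]; exact hprod
    rw [Multiset.map_add, Multiset.prod_add, Multiset.map_replicate,
      Multiset.prod_replicate] at hps
    exact (Nat.div_eq_of_eq_mul_left hdpos hps.symm).symm
  · intro s1 hs1 s2 hs2 h
    rw [Finset.mem_filter] at hs1 hs2
    have h1 : Multiset.replicate i (d, c) ≤ s1 :=
      Multiset.le_count_iff_replicate_le.mp hs1.2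
    have h2 : Multiset.replicate i (d, c) ≤ s2 :=
      Multiset.le_count_iff_replicate_le.mp hs2.2
    have := congrArg (· + Multiset.replicate i (d, c)) h
    simpa [tsub_add_cancel_of_le h1, tsub_add_cancel_of_le h2] using this
  · intro t ht
    rw [mem_Fac hq] at ht
    obtain ⟨hparts, hprod⟩ := ht
    refine ⟨t + Multiset.replicate i (d, c), ?_, ?_⟩
    · rw [Finset.mem_filter]
      constructor
      · rw [mem_Fac hn]
        constructor
        · intro p hp
          rcases Multiset.mem_add.mp hp with hp | hp
          · exact hparts p hp
          · rw [Multiset.eq_of_mem_replicate hp]; exact ⟨hd, hc⟩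
        · rw [Multiset.map_add, Multiset.prod_add, Multiset.map_replicate,
            Multiset.prod_replicate, hprod]
          exact Nat.div_mul_cancel hdvd
      · rw [Multiset.count_add, Multiset.count_replicate_self]
        omega
    · simp

lemma filter_count_empty {l n d c i : ℕ} (hn : 1 ≤ n) (hi : 1 ≤ i)
    (hdvd : ¬ d ^ i ∣ n) :
    ((Fac l n).filter (fun s => i ≤ s.count (d, c))) = ∅ := by
  rw [Finset.filter_eq_empty_iff]
  intro s hs hcount
  rw [mem_Fac hn] at hs
  have h1 : d ^ s.count (d, c) ∣ n := by
    have := pow_count_dvd (l := l) hs.2 (d, c)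
    simpa using this
  exact hdvd ((pow_dvd_pow d hcount).trans h1)

lemma sum_count {l n : ℕ} (hn : 1 ≤ n) (a : ℕ × ℕ) :
    ∑ s ∈ Fac l n, s.count a =
      ∑ i ∈ Finset.Icc 1 n, ((Fac l n).filter (fun s => i ≤ s.count a)).card := by
  have key : ∀ s ∈ Fac l n,
      s.count a = ∑ i ∈ Finset.Icc 1 n, if i ≤ s.count a then 1 else 0 := by
    intro s hs
    rw [mem_Fac hn] at hs
    have hc := count_le_n hn hs.1 hs.2 a
    rw [← Finset.card_filter]
    have : (Finset.Icc 1 n).filter (fun i => i ≤ s.count a) = Finset.Icc 1 (s.count a) := by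
      ext i
      simp only [Finset.mem_filter, Finset.mem_Icc]
      omega
    rw [this, Nat.card_Icc]; omega
  rw [Finset.sum_congr rfl key, Finset.sum_comm]
  exact Finset.sum_congr rfl fun i _ => (Finset.card_filter _ _).symm

theorem A_log_recursion (l n : ℕ) (hl : 1 ≤ l) (hn : 2 ≤ n) :
    A l 1 = 1 ∧
    (A l n : ℝ) * Real.log n =
      l * ∑ p ∈ (Finset.range (n + 1) ×ˢ Finset.range (n + 1)).filter
            (fun p => 2 ≤ p.1 ∧ 1 ≤ p.2 ∧ p.1 ^ p.2 ∣ n),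
          (A l (n / p.1 ^ p.2) : ℝ) * Real.log p.1 := by
  refine ⟨A_one l, ?_⟩
  have hn1 : 1 ≤ n := by omega
  -- per-factorization expansion of log n
  have e1 : ∀ s ∈ Fac l n, Real.log n =
      ∑ a ∈ pgrid l n, (s.count a : ℝ) * Real.log a.1 := by
    intro s hs
    rw [mem_Fac hn1] at hs
    obtain ⟨hparts, hprod⟩ := hs
    have h1 : Real.log n = ((s.map Prod.fst).map fun d : ℕ => Real.log d).sum := by
      rw [← hprod]
      exact log_multiset_prod _ fun d hd => by
        obtain ⟨p, hp, rfl⟩ := Multiset.mem_map.mp hd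
        exact le_trans one_le_two (hparts p hp).1
    rw [h1, Multiset.map_map]
    rw [Finset.sum_multiset_map_count]
    rw [Finset.sum_subset
        (fun a ha => mem_pgrid hn1 hparts hprod (Multiset.mem_toFinset.mp ha))
        (fun a _ ha => by
          simp [Multiset.count_eq_zero_of_notMem
            (fun h => ha (Multiset.mem_toFinset.mpr h))])]
    exact Finset.sum_congr rfl fun a _ => by simp [nsmul_eq_mul]
  have key : ∀ a ∈ pgrid l n,
      (∑ s ∈ Fac l n, (s.count a : ℝ)) * Real.log a.1 =
        ∑ i ∈ Finset.Icc 1 n,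
          (if 2 ≤ a.1 ∧ a.1 ^ i ∣ n then (A l (n / a.1 ^ i) : ℝ) else 0) *
            Real.log a.1 := by
    rintro ⟨d, c⟩ hag
    have hc : c < l := by
      simpa [pgrid] using (Finset.mem_product.mp hag).2
    by_cases hd : 2 ≤ d
    · have hmain : (∑ s ∈ Fac l n, ((s.count (d, c)) : ℝ)) =
          ∑ i ∈ Finset.Icc 1 n, (if d ^ i ∣ n then (A l (n / d ^ i) : ℝ) else 0) := by
        rw [← Nat.cast_sum, sum_count hn1, Nat.cast_sum]
        refine Finset.sum_congr rfl fun i hi => ?_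
        have hi1 : 1 ≤ i := (Finset.mem_Icc.mp hi).1
        by_cases hdvd : d ^ i ∣ n
        · have hq : 1 ≤ n / d ^ i :=
            Nat.div_pos (Nat.le_of_dvd hn1 hdvd) (Nat.pow_pos (by omega : 0 < d))
          rw [card_filter_count hn1 hd hc hi1 hdvd, if_pos hdvd, A_eq_card hq]
        · rw [filter_count_empty hn1 hi1 hdvd, if_neg hdvd]; simp
      simp only []
      rw [hmain, Finset.sum_mul]
      refine Finset.sum_congr rfl fun i _ => ?_
      congr 1
      simp [hd]
    · have hd01 : d = 0 ∨ d = 1 := by omega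
      have hlog : Real.log ((d : ℕ) : ℝ) = 0 := by
        rcases hd01 with rfl | rfl <;> simp
      simp only []
      rw [hlog]
      simp [hd]
  -- assemble
  rw [A_eq_card hn1]
  calc ((Fac l n).card : ℝ) * Real.log n
      = ∑ s ∈ Fac l n, Real.log n := by rw [Finset.sum_const, nsmul_eq_mul]
    _ = ∑ s ∈ Fac l n, ∑ a ∈ pgrid l n, (s.count a : ℝ) * Real.log a.1 :=
        Finset.sum_congr rfl e1
    _ = ∑ a ∈ pgrid l n, ∑ s ∈ Fac l n, (s.count a : ℝ) * Real.log a.1 :=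
        Finset.sum_comm
    _ = ∑ a ∈ pgrid l n, (∑ s ∈ Fac l n, (s.count a : ℝ)) * Real.log a.1 := by
        exact Finset.sum_congr rfl fun a _ => (Finset.sum_mul _ _ _).symm
    _ = ∑ a ∈ pgrid l n, ∑ i ∈ Finset.Icc 1 n,
          (if 2 ≤ a.1 ∧ a.1 ^ i ∣ n then (A l (n / a.1 ^ i) : ℝ) else 0) *
            Real.log a.1 := Finset.sum_congr rfl key
    _ = ∑ d ∈ Finset.range (n + 1), ∑ c ∈ Finset.range l, ∑ i ∈ Finset.Icc 1 n,
          (if 2 ≤ d ∧ d ^ i ∣ n then (A l (n / d ^ i) : ℝ) else 0) * Real.log d := by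
        rw [pgrid, Finset.sum_product]
    _ = (l : ℝ) * ∑ d ∈ Finset.range (n + 1), ∑ i ∈ Finset.Icc 1 n,
          (if 2 ≤ d ∧ d ^ i ∣ n then (A l (n / d ^ i) : ℝ) else 0) * Real.log d := by
        rw [Finset.mul_sum]
        refine Finset.sum_congr rfl fun d _ => ?_
        rw [Finset.sum_const, Finset.card_range, nsmul_eq_mul]
    _ = l * ∑ p ∈ (Finset.range (n + 1) ×ˢ Finset.range (n + 1)).filter
            (fun p => 2 ≤ p.1 ∧ 1 ≤ p.2 ∧ p.1 ^ p.2 ∣ n),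
          (A l (n / p.1 ^ p.2) : ℝ) * Real.log p.1 := by
        rw [Finset.sum_filter, Finset.sum_product]
        congr 1
        refine Finset.sum_congr rfl fun d _ => ?_
        calc ∑ i ∈ Finset.Icc 1 n,
              (if 2 ≤ d ∧ d ^ i ∣ n then (A l (n / d ^ i) : ℝ) else 0) * Real.log d
            = ∑ i ∈ Finset.Icc 1 n,
              (if 2 ≤ d ∧ 1 ≤ i ∧ d ^ i ∣ n then
                (A l (n / d ^ i) : ℝ) * Real.log d else 0) := by
              refine Finset.sum_congr rfl fun i hi => ?_
              have hi1 : 1 ≤ i := (Finset.mem_Icc.mp hi).1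
              by_cases h : 2 ≤ d ∧ d ^ i ∣ n
              · rw [if_pos h, if_pos ⟨h.1, hi1, h.2⟩]
              · rw [if_neg h, if_neg (by tauto), zero_mul]
          _ = ∑ i ∈ Finset.range (n + 1),
              (if 2 ≤ d ∧ 1 ≤ i ∧ d ^ i ∣ n then
                (A l (n / d ^ i) : ℝ) * Real.log d else 0) := by
              refine Finset.sum_subset (fun i hi => ?_) (fun i hir hini => ?_)
              · have := Finset.mem_Icc.mp hi
                exact Finset.mem_range.mpr (by omega)
              · have : ¬ (1 ≤ i ∧ i ≤ n) := fun h => hini (Finset.mem_Icc.mpr h)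
                have hi0 : i = 0 := by
                  have := Finset.mem_range.mp hir
                  omega
                subst hi0
                simp
end

section
/- For l ≥ 1 and n ≥ 2, B_l(n) satisfies the recursion B_l(n)·log n = l · Σ (-1)^{i+1} B_l(n/d^i)·log d, where the sum runs over all pairs (d, i) with d ≥ 2, i ≥ 1, and d^i dividing n, with boundary condition B_l(1) = 1. -/
open Finset

/-- `B l n`: number of unordered distinct factorizations of `n` into parts `≥ 2`
of at most `l` colors (multisets of pairwise distinct (value, color) pairs). -/
noncomputable def B (l n : ℕ) : ℕ :=
  Set.ncard {s : Multiset (ℕ × ℕ) | s.Nodup ∧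
    (∀ p ∈ s, 2 ≤ p.1 ∧ p.2 < l) ∧ (s.map Prod.fst).prod = n}

def Fa (l n : ℕ) : Finset (Finset (ℕ × ℕ)) :=
  ((Finset.range (n + 1) ×ˢ Finset.range l).powerset).filter
    (fun s => (∀ p ∈ s, 2 ≤ p.1) ∧ ∏ p ∈ s, p.1 = n)

lemma mem_Fa {l n : ℕ} (hn : 1 ≤ n) {s : Finset (ℕ × ℕ)} :
    s ∈ Fa l n ↔ (∀ p ∈ s, 2 ≤ p.1 ∧ p.2 < l) ∧ ∏ p ∈ s, p.1 = n := by
  simp only [Fa, mem_filter, mem_powerset]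
  constructor
  · rintro ⟨hsub, h2, hprod⟩
    refine ⟨fun p hp => ⟨h2 p hp, ?_⟩, hprod⟩
    have := hsub hp
    simp only [Finset.mem_product, Finset.mem_range] at this
    exact this.2
  · rintro ⟨h1, h2⟩
    refine ⟨fun p hp => ?_, fun p hp => (h1 p hp).1, h2⟩
    have hdvd : p.1 ∣ n := h2 ▸ Finset.dvd_prod_of_mem _ hp
    simp only [Finset.mem_product, Finset.mem_range]
    exact ⟨Nat.lt_succ_of_le (Nat.le_of_dvd hn hdvd), (h1 p hp).2⟩

lemma B_eq_card {l n : ℕ} (hn : 1 ≤ n) : B l n = (Fa l n).card := by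
  have hset : {s : Multiset (ℕ × ℕ) | s.Nodup ∧
      (∀ p ∈ s, 2 ≤ p.1 ∧ p.2 < l) ∧ (s.map Prod.fst).prod = n}
      = Finset.val '' ↑(Fa l n) := by
    ext s
    simp only [Set.mem_image, Set.mem_setOf_eq, Finset.mem_coe]
    constructor
    · rintro ⟨hnd, h1, h2⟩
      exact ⟨⟨s, hnd⟩, (mem_Fa hn).2 ⟨h1, h2⟩, rfl⟩
    · rintro ⟨t, ht, rfl⟩
      rw [mem_Fa hn] at ht
      exact ⟨t.nodup, ht.1, ht.2⟩
  rw [B, hset, Set.ncard_image_of_injective _ Finset.val_injective, Set.ncard_coe_finset]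

lemma B_one (l : ℕ) : B l 1 = 1 := by
  rw [B_eq_card le_rfl]
  have h : Fa l 1 = {∅} := by
    ext s
    rw [mem_Fa le_rfl, Finset.mem_singleton]
    constructor
    · rintro ⟨h1, h2⟩
      by_contra hne
      obtain ⟨p, hp⟩ := Finset.nonempty_iff_ne_empty.2 hne
      have hd : p.1 ∣ 1 := h2 ▸ Finset.dvd_prod_of_mem _ hp
      have := Nat.le_of_dvd one_pos hd
      have := (h1 p hp).1
      omega
    · rintro rfl
      simp
  rw [h, Finset.card_singleton]

def Afin (n : ℕ) : Finset (ℕ × ℕ) :=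
  (Finset.range (n + 1) ×ˢ Finset.range (n + 1)).filter
    (fun p => 2 ≤ p.1 ∧ 1 ≤ p.2 ∧ p.1 ^ p.2 ∣ n)

def Qfin (l n : ℕ) : Finset ((_ : (ℕ × ℕ) × ℕ) × Finset (ℕ × ℕ)) :=
  (Afin n ×ˢ Finset.range l).sigma (fun x => Fa l (n / x.1.1 ^ x.1.2))

lemma mem_Qfin {l n : ℕ} {q : (_ : (ℕ × ℕ) × ℕ) × Finset (ℕ × ℕ)} :
    q ∈ Qfin l n ↔ (2 ≤ q.1.1.1 ∧ 1 ≤ q.1.1.2 ∧ q.1.1.1 ^ q.1.1.2 ∣ n ∧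
      q.1.1.1 < n + 1 ∧ q.1.1.2 < n + 1) ∧ q.1.2 < l ∧
      q.2 ∈ Fa l (n / q.1.1.1 ^ q.1.1.2) := by
  simp only [Qfin, Afin, Finset.mem_sigma, Finset.mem_product, Finset.mem_filter,
    Finset.mem_range]
  tauto

lemma exp_lt {d i n : ℕ} (hd : 2 ≤ d) (hn : 1 ≤ n) (hdvd : d ^ i ∣ n) : i < n + 1 := by
  have h1 : d ^ i ≤ n := Nat.le_of_dvd (by omega) hdvd
  have h2 : 2 ^ i ≤ d ^ i := Nat.pow_le_pow_left hd i
  have h3 : i < 2 ^ i := Nat.lt_two_pow_self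
  omega

lemma step_up {l n d i c : ℕ} {t : Finset (ℕ × ℕ)} (hn : 1 ≤ n) (hd : 2 ≤ d)
    (hdvd : d ^ i ∣ n) (ht : t ∈ Fa l (n / d ^ i)) (hmem : (d, c) ∈ t) :
    d ^ (i + 1) ∣ n ∧ t.erase (d, c) ∈ Fa l (n / d ^ (i + 1)) := by
  have hpos : 0 < d ^ i := pow_pos (by omega) _
  have hq1 : 1 ≤ n / d ^ i := Nat.div_pos (Nat.le_of_dvd (by omega) hdvd) hpos
  rw [mem_Fa hq1] at ht
  have hddvd : d ∣ n / d ^ i := ht.2 ▸ Finset.dvd_prod_of_mem _ hmem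
  have hdvd' : d ^ (i + 1) ∣ n := by
    have h1 : d ^ i * (n / d ^ i) = n := Nat.mul_div_cancel' hdvd
    obtain ⟨k, hk⟩ := hddvd
    have hfin : n = d ^ (i + 1) * k := by rw [pow_succ, mul_assoc, ← hk, h1]
    exact ⟨k, hfin⟩
  refine ⟨hdvd', ?_⟩
  have hpe : d * ∏ p ∈ t.erase (d, c), p.1 = n / d ^ i := by
    rw [← ht.2]; exact Finset.mul_prod_erase t Prod.fst hmem
  have hprod : ∏ p ∈ t.erase (d, c), p.1 = n / d ^ (i + 1) := by
    have h2 : n / d ^ (i + 1) = n / d ^ i / d := by rw [pow_succ, Nat.div_div_eq_div_mul]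
    rw [h2, ← hpe, Nat.mul_div_cancel_left _ (by omega : 0 < d)]
  have hq2 : 1 ≤ n / d ^ (i + 1) :=
    Nat.div_pos (Nat.le_of_dvd (by omega) hdvd') (pow_pos (by omega) _)
  rw [mem_Fa hq2]
  exact ⟨fun p hp => ht.1 p (Finset.mem_of_mem_erase hp), hprod⟩

lemma step_down {l n d i c : ℕ} {t : Finset (ℕ × ℕ)} (hn : 1 ≤ n) (hd : 2 ≤ d)
    (hi : 2 ≤ i) (hdvd : d ^ i ∣ n) (ht : t ∈ Fa l (n / d ^ i)) (hc : c < l)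
    (hmem : (d, c) ∉ t) :
    d ^ (i - 1) ∣ n ∧ insert (d, c) t ∈ Fa l (n / d ^ (i - 1)) := by
  obtain ⟨j, rfl⟩ : ∃ j, i = j + 1 := ⟨i - 1, by omega⟩
  simp only [Nat.add_sub_cancel]
  have hpos : 0 < d ^ (j + 1) := pow_pos (by omega) _
  obtain ⟨m, hm⟩ := hdvd
  have hdiv : n / d ^ (j + 1) = m := by rw [hm, Nat.mul_div_cancel_left _ hpos]
  have hm2 : n = d ^ j * (d * m) := by rw [hm, pow_succ]; ring
  have hkey : n / d ^ j = d * m := by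
    rw [hm2, Nat.mul_div_cancel_left _ (pow_pos (by omega : 0 < d) _)]
  have hq1 : 1 ≤ n / d ^ (j + 1) := Nat.div_pos (Nat.le_of_dvd (by omega) ⟨m, hm⟩) hpos
  rw [mem_Fa hq1] at ht
  refine ⟨⟨d * m, hm2⟩, ?_⟩
  have hq2 : 1 ≤ n / d ^ j := by
    rw [hkey]; have hm0 : 0 < m := by rw [← hdiv]; omega
    exact Nat.mul_pos (by omega) hm0
  rw [mem_Fa hq2]
  constructor
  · intro p hp
    rcases Finset.mem_insert.1 hp with h | h
    · rw [h]; exact ⟨hd, hc⟩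
    · exact ht.1 p h
  · rw [Finset.prod_insert hmem, ht.2, hdiv, hkey]

lemma rhs_eq (l n : ℕ) (hn : 2 ≤ n) :
    (l : ℝ) * ∑ p ∈ Afin n, (-1 : ℝ) ^ (p.2 + 1) * (B l (n / p.1 ^ p.2) : ℝ) * Real.log p.1
      = ∑ q ∈ Qfin l n, (-1 : ℝ) ^ (q.1.1.2 + 1) * Real.log q.1.1.1 := by
  rw [Qfin, Finset.sum_sigma, Finset.sum_product, Finset.mul_sum]
  refine Finset.sum_congr rfl fun p hp => ?_
  have hp' : 1 ≤ n / p.1 ^ p.2 := by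
    simp only [Afin, Finset.mem_filter] at hp
    exact Nat.div_pos (Nat.le_of_dvd (by omega) hp.2.2.2) (pow_pos (by omega) _)
  rw [B_eq_card hp']
  simp only [Finset.sum_const, nsmul_eq_mul, Finset.card_range]
  ring

lemma lhs_eq (l n : ℕ) (hn : 1 ≤ n) :
    (B l n : ℝ) * Real.log n = ∑ σ ∈ (Fa l n).sigma (fun s => s), Real.log σ.2.1 := by
  rw [Finset.sum_sigma, B_eq_card hn]
  have h0 : ((Fa l n).card : ℝ) * Real.log n = ∑ s ∈ Fa l n, Real.log n := by
    rw [Finset.sum_const, nsmul_eq_mul]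
  rw [h0]
  refine Finset.sum_congr rfl fun s hs => ?_
  rw [mem_Fa hn] at hs
  have hne : ∀ p ∈ s, ((p.1 : ℝ)) ≠ 0 := fun p hp =>
    Nat.cast_ne_zero.2 (by have := (hs.1 p hp).1; omega)
  rw [← hs.2]
  push_cast
  exact Real.log_prod hne

lemma fix_eq (l n : ℕ) (hn : 2 ≤ n) :
    ∑ q ∈ (Qfin l n).filter (fun q => q.1.1.2 = 1 ∧ (q.1.1.1, q.1.2) ∉ q.2),
        (-1 : ℝ) ^ (q.1.1.2 + 1) * Real.log q.1.1.1
      = ∑ σ ∈ (Fa l n).sigma (fun s => s), Real.log σ.2.1 := by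
  refine Finset.sum_nbij' (fun q => ⟨insert (q.1.1.1, q.1.2) q.2, (q.1.1.1, q.1.2)⟩)
    (fun σ => ⟨((σ.2.1, 1), σ.2.2), σ.1.erase σ.2⟩) ?_ ?_ ?_ ?_ ?_
  · rintro ⟨⟨⟨d, i⟩, c⟩, t⟩ hq
    simp only [Finset.mem_filter, mem_Qfin] at hq
    obtain ⟨⟨⟨hd, hi, hdvd, hdb, hib⟩, hc, ht⟩, hfix, hnm⟩ := hq
    subst hfix
    rw [pow_one] at hdvd ht
    have hq1 : 1 ≤ n / d := Nat.div_pos (Nat.le_of_dvd (by omega) hdvd) (by omega)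
    rw [mem_Fa hq1] at ht
    rw [Finset.mem_sigma]
    constructor
    · rw [mem_Fa (by omega : 1 ≤ n)]
      constructor
      · intro p hp
        rcases Finset.mem_insert.1 hp with h | h
        · rw [h]; exact ⟨hd, hc⟩
        · exact ht.1 p h
      · rw [Finset.prod_insert hnm, ht.2]
        exact Nat.mul_div_cancel' hdvd
    · exact Finset.mem_insert_self _ _
  · rintro ⟨s, p⟩ hσ
    rw [Finset.mem_sigma] at hσ
    obtain ⟨hs, hp⟩ := hσ
    rw [mem_Fa (by omega : 1 ≤ n)] at hs
    have hd2 := (hs.1 p hp).1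
    have hcl := (hs.1 p hp).2
    have hdvd : p.1 ∣ n := hs.2 ▸ Finset.dvd_prod_of_mem _ hp
    have hprod : p.1 * ∏ x ∈ s.erase p, x.1 = n := by
      rw [← hs.2]; exact Finset.mul_prod_erase s Prod.fst hp
    have herase : ∏ x ∈ s.erase p, x.1 = n / p.1 := by
      rw [← hprod, Nat.mul_div_cancel_left _ (by omega : 0 < p.1)]
    simp only [Finset.mem_filter, mem_Qfin]
    refine ⟨⟨⟨hd2, le_rfl, by rw [pow_one]; exact hdvd,
      Nat.lt_succ_of_le (Nat.le_of_dvd (by omega) hdvd), by omega⟩, hcl, ?_⟩, trivial, ?_⟩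
    · rw [pow_one, mem_Fa (Nat.div_pos (Nat.le_of_dvd (by omega) hdvd) (by omega))]
      exact ⟨fun x hx => hs.1 x (Finset.mem_of_mem_erase hx), herase⟩
    · simp
  · rintro ⟨⟨⟨d, i⟩, c⟩, t⟩ hq
    simp only [Finset.mem_filter, mem_Qfin] at hq
    obtain ⟨-, hfix, hnm⟩ := hq
    subst hfix
    simp [Finset.erase_insert hnm]
  · rintro ⟨s, p⟩ hσ
    rw [Finset.mem_sigma] at hσ
    simp [Finset.insert_erase hσ.2]
  · rintro ⟨⟨⟨d, i⟩, c⟩, t⟩ hq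
    simp only [Finset.mem_filter, mem_Qfin] at hq
    obtain ⟨-, hfix, -⟩ := hq
    subst hfix
    norm_num

lemma mov_eq_zero (l n : ℕ) (hn : 2 ≤ n) :
    ∑ q ∈ (Qfin l n).filter (fun q => ¬(q.1.1.2 = 1 ∧ (q.1.1.1, q.1.2) ∉ q.2)),
        (-1 : ℝ) ^ (q.1.1.2 + 1) * Real.log q.1.1.1 = 0 := by
  refine Finset.sum_involution
    (fun q _ => if (q.1.1.1, q.1.2) ∈ q.2
      then ⟨((q.1.1.1, q.1.1.2 + 1), q.1.2), q.2.erase (q.1.1.1, q.1.2)⟩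
      else ⟨((q.1.1.1, q.1.1.2 - 1), q.1.2), insert (q.1.1.1, q.1.2) q.2⟩)
    ?_ ?_ ?_ ?_
  · rintro ⟨⟨⟨d, i⟩, c⟩, t⟩ hq
    simp only [Finset.mem_filter, mem_Qfin] at hq
    obtain ⟨⟨⟨hd, hi, hdvd, hdb, hib⟩, hc, ht⟩, hmov⟩ := hq
    dsimp only
    by_cases hm : (d, c) ∈ t
    · rw [if_pos hm]
      dsimp only
      rw [pow_succ ((-1 : ℝ)) (i + 1)]
      ring
    · have hi2 : 2 ≤ i := by
        by_contra h
        push_neg at h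
        exact hmov ⟨by omega, hm⟩
      rw [if_neg hm]
      dsimp only
      obtain ⟨j, rfl⟩ : ∃ j, i = j + 2 := ⟨i - 2, by omega⟩
      have e : j + 2 - 1 = j + 1 := rfl
      rw [e]
      ring
  · rintro ⟨⟨⟨d, i⟩, c⟩, t⟩ hq hf heq
    simp only [Finset.mem_filter, mem_Qfin] at hq
    obtain ⟨⟨⟨hd, hi, hdvd, hdb, hib⟩, hc, ht⟩, hmov⟩ := hq
    dsimp only at heq
    by_cases hm : (d, c) ∈ t
    · rw [if_pos hm] at heq
      have hii : i + 1 = i := congrArg (fun q => q.1.1.2) heq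
      omega
    · rw [if_neg hm] at heq
      have hii : i - 1 = i := congrArg (fun q => q.1.1.2) heq
      have hi2 : 2 ≤ i := by
        by_contra h
        push_neg at h
        exact hmov ⟨by omega, hm⟩
      omega
  · rintro ⟨⟨⟨d, i⟩, c⟩, t⟩ hq
    simp only [Finset.mem_filter, mem_Qfin] at hq
    obtain ⟨⟨⟨hd, hi, hdvd, hdb, hib⟩, hc, ht⟩, hmov⟩ := hq
    dsimp only
    by_cases hm : (d, c) ∈ t
    · rw [if_pos hm]
      obtain ⟨hdvd', ht'⟩ := step_up (by omega) hd hdvd ht hm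
      simp only [Finset.mem_filter, mem_Qfin]
      refine ⟨⟨⟨hd, by omega, hdvd', hdb, exp_lt hd (by omega) hdvd'⟩, hc, ht'⟩, ?_⟩
      rintro ⟨h1, -⟩
      omega
    · have hi2 : 2 ≤ i := by
        by_contra h
        push_neg at h
        exact hmov ⟨by omega, hm⟩
      rw [if_neg hm]
      obtain ⟨hdvd', ht'⟩ := step_down (by omega) hd hi2 hdvd ht hc hm
      simp only [Finset.mem_filter, mem_Qfin]
      refine ⟨⟨⟨hd, by omega, hdvd', hdb, by omega⟩, hc, ht'⟩, ?_⟩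
      rintro ⟨-, h2⟩
      exact h2 (Finset.mem_insert_self _ _)
  · rintro ⟨⟨⟨d, i⟩, c⟩, t⟩ hq
    simp only [Finset.mem_filter, mem_Qfin] at hq
    obtain ⟨⟨⟨hd, hi, hdvd, hdb, hib⟩, hc, ht⟩, hmov⟩ := hq
    dsimp only
    by_cases hm : (d, c) ∈ t
    · rw [if_pos hm, if_neg (Finset.notMem_erase _ _)]
      simp [Finset.insert_erase hm]
    · rw [if_neg hm, if_pos (Finset.mem_insert_self _ _)]
      have e : i - 1 + 1 = i := by omega
      simp [Finset.erase_insert hm, e]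

theorem B_log_recursion (l n : ℕ) (hl : 1 ≤ l) (hn : 2 ≤ n) :
    B l 1 = 1 ∧
    (B l n : ℝ) * Real.log n =
      l * ∑ p ∈ (Finset.range (n + 1) ×ˢ Finset.range (n + 1)).filter
            (fun p => 2 ≤ p.1 ∧ 1 ≤ p.2 ∧ p.1 ^ p.2 ∣ n),
          (-1 : ℝ) ^ (p.2 + 1) * (B l (n / p.1 ^ p.2) : ℝ) * Real.log p.1 := by
  refine ⟨B_one l, ?_⟩
  have heq : (Finset.range (n + 1) ×ˢ Finset.range (n + 1)).filter
      (fun p => 2 ≤ p.1 ∧ 1 ≤ p.2 ∧ p.1 ^ p.2 ∣ n) = Afin n := rfl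
  rw [heq, rhs_eq l n hn, lhs_eq l n (by omega),
    ← Finset.sum_filter_add_sum_filter_not (Qfin l n)
      (fun q => q.1.1.2 = 1 ∧ (q.1.1.1, q.1.2) ∉ q.2),
    fix_eq l n hn, mov_eq_zero l n hn, add_zero]
end

section
/- For every n ≥ 2 and l ≥ 1, the number of unordered prime factorizations of n using exactly l colors (every one of the l colors appears on at least one prime part) equals the number of ordered factorizations of n into exactly l parts each ≥ 2. -/
/-- Number of unordered prime factorizations of `n` using exactly `l` colors. -/
noncomputable def primeCola (l n : ℕ) : ℕ :=
  Set.ncard {s : Multiset (ℕ × ℕ) |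
    (∀ p ∈ s, p.1.Prime ∧ p.2 < l) ∧ (∀ c < l, ∃ p ∈ s, p.2 = c) ∧
    (s.map Prod.fst).prod = n}

/-- `fl l n`: the number of ordered factorizations of `n` into exactly `l`
parts `≥ 2` (as `l`-tuples). -/
noncomputable def fl (l n : ℕ) : ℕ :=
  Set.ncard {t : Fin l → ℕ | (∀ i, 2 ≤ t i) ∧ ∏ i, t i = n}

private lemma prime_multiset_eq {q : Multiset ℕ} (hq : ∀ p ∈ q, p.Prime) :
    q = (q.prod.primeFactorsList : Multiset ℕ) := by
  induction q using Quotient.inductionOn with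
  | h L =>
    rw [Multiset.quot_mk_to_coe, Multiset.prod_coe]
    exact Multiset.coe_eq_coe.mpr
      (Nat.primeFactorsList_unique rfl (fun p hp => hq p (by simpa using hp)))

private lemma filter_finset_sum {ι α : Type*} (p : α → Prop) [DecidablePred p]
    (s : Finset ι) (f : ι → Multiset α) :
    (∑ i ∈ s, f i).filter p = ∑ i ∈ s, (f i).filter p := by
  induction s using Finset.cons_induction with
  | empty => simp
  | cons a s ha ih => simp [Finset.sum_cons, Multiset.filter_add, ih]

private lemma multiset_map_finset_sum {ι α β : Type*} (f : α → β) (s : Finset ι)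
    (g : ι → Multiset α) :
    (∑ i ∈ s, g i).map f = ∑ i ∈ s, (g i).map f := by
  induction s using Finset.cons_induction with
  | empty => simp
  | cons a s ha ih => simp [Finset.sum_cons, Multiset.map_add, ih]

private lemma sum_filter_color (l : ℕ) (s : Multiset (ℕ × ℕ))
    (h : ∀ p ∈ s, p.2 < l) :
    ∑ i : Fin l, s.filter (fun p => p.2 = i.val) = s := by
  induction s using Multiset.induction with
  | empty => simp
  | cons a s ih =>
    have key : ∀ i : Fin l, (a ::ₘ s).filter (fun p => p.2 = i.val) =
        (if a.2 = i.val then {a} else 0) + s.filter (fun p => p.2 = i.val) := by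
      intro i; rw [Multiset.filter_cons]
    simp_rw [key]
    rw [Finset.sum_add_distrib, ih (fun p hp => h p (Multiset.mem_cons_of_mem hp))]
    have ha : a.2 < l := h a (Multiset.mem_cons_self a s)
    have : ∑ i : Fin l, (if a.2 = i.val then ({a} : Multiset (ℕ × ℕ)) else 0)
        = ∑ i : Fin l, (if i = (⟨a.2, ha⟩ : Fin l) then ({a} : Multiset (ℕ × ℕ)) else 0) := by
      refine Finset.sum_congr rfl fun i _ => ?_
      congr 1
      simp only [eq_iff_iff]
      constructor
      · intro hv; exact Fin.ext hv.symm
      · intro hv; rw [hv]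
    rw [this, Finset.sum_ite_eq' Finset.univ (⟨a.2, ha⟩ : Fin l)
      (fun _ => ({a} : Multiset (ℕ × ℕ)))]
    simp [Multiset.cons_eq_cons]

theorem exactly_colored_prime_factorizations_eq_ordered_factorizations
    (l n : ℕ) (hl : 1 ≤ l) (hn : 2 ≤ n) :
    primeCola l n = fl l n := by
  classical
  set A : Set (Multiset (ℕ × ℕ)) := {s : Multiset (ℕ × ℕ) |
    (∀ p ∈ s, p.1.Prime ∧ p.2 < l) ∧ (∀ c < l, ∃ p ∈ s, p.2 = c) ∧
    (s.map Prod.fst).prod = n} with hA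
  set B : Set (Fin l → ℕ) := {t : Fin l → ℕ | (∀ i, 2 ≤ t i) ∧ ∏ i, t i = n} with hB
  set f : Multiset (ℕ × ℕ) → (Fin l → ℕ) :=
    fun s i => ((s.filter (fun p => p.2 = i.val)).map Prod.fst).prod with hf
  set g : (Fin l → ℕ) → Multiset (ℕ × ℕ) :=
    fun t => ∑ i : Fin l, ((t i).primeFactorsList : Multiset ℕ).map
      (fun p => (p, i.val)) with hg
  -- g is a left inverse of f on A
  have hgf : ∀ s ∈ A, g (f s) = s := by
    intro s hs
    obtain ⟨hs1, hs2, hs3⟩ := hs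
    have term : ∀ i : Fin l,
        ((f s i).primeFactorsList : Multiset ℕ).map (fun p => (p, i.val))
          = s.filter (fun p => p.2 = i.val) := by
      intro i
      have hprime : ∀ p ∈ (s.filter (fun p => p.2 = i.val)).map Prod.fst, p.Prime := by
        intro p hp
        obtain ⟨q, hq, rfl⟩ := Multiset.mem_map.mp hp
        exact (hs1 q (Multiset.mem_of_mem_filter hq)).1
      have := prime_multiset_eq hprime
      rw [hf]
      simp only
      rw [← this, Multiset.map_map]
      have : ∀ q ∈ s.filter (fun p : ℕ × ℕ => p.2 = i.val),
          ((fun p => (p, i.val)) ∘ Prod.fst) q = id q := by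
        intro q hq
        have h2 : q.2 = i.val := (Multiset.mem_filter.mp hq).2
        simp [← h2]
      rw [Multiset.map_congr rfl this, Multiset.map_id]
    rw [hg]
    simp only
    rw [Finset.sum_congr rfl (fun i _ => term i)]
    exact sum_filter_color l s (fun p hp => (hs1 p hp).2)
  -- f is a right inverse of g on B
  have hfg : ∀ t ∈ B, f (g t) = t := by
    intro t ht
    obtain ⟨ht1, _⟩ := ht
    funext i
    have hfilter : (g t).filter (fun p => p.2 = i.val)
        = ((t i).primeFactorsList : Multiset ℕ).map (fun p => (p, i.val)) := by
      rw [hg]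
      simp only
      rw [filter_finset_sum]
      rw [Finset.sum_eq_single i]
      · exact Multiset.filter_eq_self.mpr (by
          intro a ha
          obtain ⟨q, _, rfl⟩ := Multiset.mem_map.mp ha
          rfl)
      · intro j _ hji
        refine Multiset.filter_eq_nil.mpr ?_
        intro a ha
        obtain ⟨q, _, rfl⟩ := Multiset.mem_map.mp ha
        simp only
        intro hv
        exact hji (Fin.ext hv)
      · intro hi; exact absurd (Finset.mem_univ i) hi
    rw [hf]
    simp only
    rw [hfilter, Multiset.map_map]
    have : ((t i).primeFactorsList : Multiset ℕ).map (Prod.fst ∘ fun p => (p, i.val))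
        = ((t i).primeFactorsList : Multiset ℕ) := by
      rw [show (Prod.fst ∘ fun p : ℕ => (p, i.val)) = id from rfl, Multiset.map_id]
    rw [this, Multiset.prod_coe, Nat.prod_primeFactorsList
      (by have := ht1 i; omega : t i ≠ 0)]
  -- f maps A into B
  have hmaps : ∀ s ∈ A, f s ∈ B := by
    intro s hs
    obtain ⟨hs1, hs2, hs3⟩ := hs
    constructor
    · intro i
      obtain ⟨p, hp, hpc⟩ := hs2 i.val i.isLt
      have hpf : p.1 ∈ (s.filter (fun p => p.2 = i.val)).map Prod.fst :=
        Multiset.mem_map_of_mem _ (Multiset.mem_filter.mpr ⟨hp, hpc⟩)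
      have hpos : 0 < ((s.filter (fun p => p.2 = i.val)).map Prod.fst).prod := by
        refine Multiset.prod_pos ?_
        intro a ha
        obtain ⟨q, hq, rfl⟩ := Multiset.mem_map.mp ha
        exact (hs1 q (Multiset.mem_of_mem_filter hq)).1.pos
      calc 2 ≤ p.1 := (hs1 p hp).1.two_le
        _ ≤ _ := Nat.le_of_dvd hpos (Multiset.dvd_prod hpf)
    · rw [hf]
      simp only
      rw [← Multiset.prod_sum]
      have : ∑ i : Fin l, (s.filter (fun p => p.2 = i.val)).map Prod.fst
          = s.map Prod.fst := by
        rw [← multiset_map_finset_sum, sum_filter_color l s (fun p hp => (hs1 p hp).2)]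
      rw [this, hs3]
  -- g maps B into A
  have hmaps' : ∀ t ∈ B, g t ∈ A := by
    intro t ht
    obtain ⟨ht1, ht2⟩ := ht
    refine ⟨?_, ?_, ?_⟩
    · intro p hp
      rw [hg] at hp
      simp only at hp
      rw [Multiset.mem_sum] at hp
      obtain ⟨i, _, hpi⟩ := hp
      obtain ⟨q, hq, rfl⟩ := Multiset.mem_map.mp hpi
      exact ⟨Nat.prime_of_mem_primeFactorsList (by simpa using hq), i.isLt⟩
    · intro c hc
      have hne : (t ⟨c, hc⟩).primeFactorsList ≠ [] := by
        intro hnil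
        rcases (Nat.primeFactorsList_eq_nil _).mp hnil with h | h <;>
          · have := ht1 ⟨c, hc⟩; omega
      obtain ⟨p, hp⟩ := List.exists_mem_of_ne_nil _ hne
      refine ⟨(p, c), ?_, rfl⟩
      rw [hg]
      simp only
      rw [Multiset.mem_sum]
      exact ⟨⟨c, hc⟩, Finset.mem_univ _,
        Multiset.mem_map_of_mem _ (by simpa using hp)⟩
    · rw [hg]
      simp only
      rw [multiset_map_finset_sum]
      simp_rw [Multiset.map_map]
      have : ∀ i : Fin l, ((t i).primeFactorsList : Multiset ℕ).map
          (Prod.fst ∘ fun p => (p, i.val)) = ((t i).primeFactorsList : Multiset ℕ) := by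
        intro i
        rw [show (Prod.fst ∘ fun p : ℕ => (p, i.val)) = id from rfl, Multiset.map_id]
      rw [Finset.sum_congr rfl fun i _ => this i, Multiset.prod_sum]
      simp_rw [Multiset.prod_coe]
      rw [Finset.prod_congr rfl fun i _ =>
        Nat.prod_primeFactorsList (by have := ht1 i; omega : t i ≠ 0), ht2]
  have himg : f '' A = B := by
    ext t
    constructor
    · rintro ⟨s, hs, rfl⟩; exact hmaps s hs
    · intro ht; exact ⟨g t, hmaps' t ht, hfg t ht⟩
  have hinj : Set.InjOn f A := by
    intro s hs s' hs' hss
    rw [← hgf s hs, ← hgf s' hs', hss]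
  calc primeCola l n = A.ncard := rfl
    _ = (f '' A).ncard := (Set.ncard_image_of_injOn hinj).symm
    _ = B.ncard := by rw [himg]
    _ = fl l n := rfl
end

section
/- Let n be a squarefree integer with exactly m ≥ 1 distinct prime factors and l ≥ 1. Then the number of ordered l-colored factorizations of n into parts ≥ 2 equals Σ_{k=1}^{m} l^k · k! · S(m, k), and this also equals the number of ordered l-colored distinct factorizations of n. -/
/-- `tA l n`: number of ordered factorizations of `n` into parts `≥ 2`
of at most `l` colors (finite sequences of (value, color) pairs). -/
noncomputable def tA (l n : ℕ) : ℕ :=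
  Set.ncard {L : List (ℕ × ℕ) |
    (∀ p ∈ L, 2 ≤ p.1 ∧ p.2 < l) ∧ (L.map Prod.fst).prod = n}

/-- `tB l n`: number of ordered distinct factorizations of `n` into parts `≥ 2`
of at most `l` colors (sequences of pairwise distinct (value, color) pairs). -/
noncomputable def tB (l n : ℕ) : ℕ :=
  Set.ncard {L : List (ℕ × ℕ) | L.Nodup ∧
    (∀ p ∈ L, 2 ≤ p.1 ∧ p.2 < l) ∧ (L.map Prod.fst).prod = n}

/-- Stirling numbers of the second kind. -/
def stirling2 : ℕ → ℕ → ℕ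
  | 0, 0 => 1
  | 0, _ + 1 => 0
  | _ + 1, 0 => 0
  | n + 1, k + 1 => (k + 1) * stirling2 n (k + 1) + stirling2 n k


/-- `Tst m k = k! * S(m,k)`, the number of surjections from `[m]` onto `[k]`. -/
def Tst (m k : ℕ) : ℕ := k.factorial * stirling2 m k

lemma stirling2_zero_right : ∀ m, stirling2 m 0 = if m = 0 then 1 else 0
  | 0 => rfl
  | _ + 1 => rfl

lemma stirling2_eq_zero : ∀ {m k : ℕ}, m < k → stirling2 m k = 0
  | 0, _ + 1, _ => rfl
  | m + 1, k + 1, h => by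
      have h1 : m < k + 1 := Nat.lt_of_succ_lt_succ h |>.trans (Nat.lt_succ_self k)
      have h2 : m < k := Nat.lt_of_succ_lt_succ h
      simp [stirling2, stirling2_eq_zero h1, stirling2_eq_zero h2]

lemma Tst_zero (k : ℕ) : Tst 0 k = if k = 0 then 1 else 0 := by
  cases k with
  | zero => rfl
  | succ k => simp [Tst, stirling2]

lemma Tst_succ_succ (m k : ℕ) : Tst (m + 1) (k + 1) = (k + 1) * (Tst m (k + 1) + Tst m k) := by
  unfold Tst
  show (k+1).factorial * ((k + 1) * stirling2 m (k + 1) + stirling2 m k) = _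
  rw [Nat.factorial_succ]
  ring

lemma Tst_zero_right (m : ℕ) : Tst m 0 = if m = 0 then 1 else 0 := by
  simp [Tst, stirling2_zero_right]

lemma keyP : ∀ m k : ℕ, Tst (m + 1) (k + 1) =
    ∑ j ∈ Finset.range (m + 1), (m + 1).choose (j + 1) * Tst (m - j) k := by
  intro m
  induction m with
  | zero =>
    intro k
    simp [Tst_succ_succ, Tst_zero, Nat.mul_add]
    cases k <;> simp [Tst_zero]
  | succ m ih =>
    intro k
    have pascal : ∀ j, (m + 2).choose (j + 1) = (m+1).choose j + (m+1).choose (j+1) :=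
      fun j => Nat.choose_succ_succ (m+1) j
    -- RHS = S1 + S2
    have hsplit : ∑ j ∈ Finset.range (m + 2), (m + 2).choose (j + 1) * Tst (m + 1 - j) k
        = (∑ j ∈ Finset.range (m + 2), (m+1).choose j * Tst (m + 1 - j) k)
          + (∑ j ∈ Finset.range (m + 2), (m+1).choose (j+1) * Tst (m + 1 - j) k) := by
      rw [← Finset.sum_add_distrib]
      exact Finset.sum_congr rfl fun j _ => by rw [pascal j, Nat.add_mul]
    -- S2 : drop last term (choose (m+1) (m+2) = 0), and rewrite m+1-j = (m-j)+1
    have hS2 : ∑ j ∈ Finset.range (m + 2), (m+1).choose (j+1) * Tst (m + 1 - j) k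
        = ∑ j ∈ Finset.range (m + 1), (m+1).choose (j+1) * Tst ((m - j) + 1) k := by
      rw [Finset.sum_range_succ, Nat.choose_succ_self, Nat.zero_mul, Nat.add_zero]
      exact Finset.sum_congr rfl fun j hj => by
        rw [Nat.succ_sub (Nat.lt_succ_iff.mp (Finset.mem_range.mp hj))]
    -- S1 : peel off first term, shift index
    have hS1 : ∑ j ∈ Finset.range (m + 2), (m+1).choose j * Tst (m + 1 - j) k
        = Tst (m+1) k + ∑ j ∈ Finset.range (m + 1), (m+1).choose (j+1) * Tst (m - j) k := by
      rw [Finset.sum_range_succ']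
      rw [Nat.add_comm]
      simp
    have hIH : ∑ j ∈ Finset.range (m + 1), (m+1).choose (j+1) * Tst (m - j) k
        = Tst (m+1) (k+1) := (ih k).symm
    rw [hsplit, hS1, hIH]
    cases k with
    | zero =>
      have : ∀ j ∈ Finset.range (m+1), (m+1).choose (j+1) * Tst ((m - j) + 1) 0 = 0 := by
        intro j hj; simp [Tst_zero_right]
      rw [hS2, Finset.sum_congr rfl this]
      simp [Tst_succ_succ]
      ring
    | succ k =>
      have hterm : ∀ j ∈ Finset.range (m+1),
          (m+1).choose (j+1) * Tst ((m - j) + 1) (k+1)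
          = (k+1) * ((m+1).choose (j+1) * Tst (m - j) (k+1))
            + (k+1) * ((m+1).choose (j+1) * Tst (m - j) k) := by
        intro j _; rw [Tst_succ_succ]; ring
      rw [hS2, Finset.sum_congr rfl hterm, Finset.sum_add_distrib,
        ← Finset.mul_sum, ← Finset.mul_sum, hIH, ← ih k,
        Tst_succ_succ (m+1) (k+1)]
      ring

/-- the target sequence (including the `k = 0` term, so `bfun l 0 = 1`). -/
def bfun (l m : ℕ) : ℕ := ∑ k ∈ Finset.range (m + 1), l ^ k * Tst m k

lemma bfun_zero (l : ℕ) : bfun l 0 = 1 := by simp [bfun, Tst_zero]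

lemma bfun_succ (l m : ℕ) :
    bfun l (m + 1) = l * ∑ j ∈ Finset.range (m + 1), (m + 1).choose (j + 1) * bfun l (m - j) := by
  have h1 : bfun l (m + 1) = ∑ k ∈ Finset.range (m + 1), l ^ (k + 1) * Tst (m + 1) (k + 1) := by
    rw [bfun, Finset.sum_range_succ']
    simp [Tst_zero_right]
  rw [h1]
  have h2 : ∀ k ∈ Finset.range (m + 1), l ^ (k + 1) * Tst (m + 1) (k + 1)
      = ∑ j ∈ Finset.range (m + 1), l * ((m + 1).choose (j + 1) * (l ^ k * Tst (m - j) k)) := by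
    intro k _
    rw [keyP, Finset.mul_sum]
    exact Finset.sum_congr rfl fun j _ => by ring
  rw [Finset.sum_congr rfl h2, Finset.sum_comm, Finset.mul_sum]
  refine Finset.sum_congr rfl fun j hj => ?_
  rw [← Finset.mul_sum, ← Finset.mul_sum]
  congr 1
  -- ∑ k ∈ range (m+1), l^k * Tst (m-j) k = bfun l (m-j)
  rw [bfun]
  have hmj : m - j + 1 ≤ m + 1 := by omega
  rw [← Finset.sum_range_add_sum_Ico _ hmj]
  have : ∀ k ∈ Finset.Ico (m - j + 1) (m + 1), l ^ k * Tst (m - j) k = 0 := by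
    intro k hk
    have : m - j < k := (Finset.mem_Ico.mp hk).1
    simp [Tst, stirling2_eq_zero this]
  rw [Finset.sum_congr rfl this, Finset.sum_const_zero]; ring

/-- The finset of ordered `l`-colored factorizations of `n`. -/
def FA (l : ℕ) : ℕ → Finset (List (ℕ × ℕ))
  | n =>
    if h : n ≤ 1 then {([] : List (ℕ × ℕ))}
    else (((n.divisors.filter (fun d => 2 ≤ d)) ×ˢ Finset.range l).attach).biUnion
      (fun dc =>
        have hd : dc.1.1 ∈ n.divisors.filter (fun d => 2 ≤ d) :=
          (Finset.mem_product.mp dc.2).1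
        have h2 : 2 ≤ dc.1.1 := (Finset.mem_filter.mp hd).2
        have : n / dc.1.1 < n := Nat.div_lt_self (by omega) (by omega)
        (FA l (n / dc.1.1)).image (fun L => dc.1 :: L))
  decreasing_by exact this

lemma FA_one (l : ℕ) : FA l 1 = {([] : List (ℕ × ℕ))} := by
  rw [FA]
  simp

lemma FA_ge_two (l n : ℕ) (hn : 2 ≤ n) :
    FA l n = (((n.divisors.filter (fun d => 2 ≤ d)) ×ˢ Finset.range l).attach).biUnion
      (fun dc => (FA l (n / dc.1.1)).image (fun L => dc.1 :: L)) := by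
  rw [FA]
  simp only [dif_neg (by omega : ¬ n ≤ 1)]

lemma FA_spec (l : ℕ) : ∀ n, 1 ≤ n → ∀ L : List (ℕ × ℕ),
    L ∈ FA l n ↔ ((∀ p ∈ L, 2 ≤ p.1 ∧ p.2 < l) ∧ (L.map Prod.fst).prod = n) := by
  intro n
  induction n using Nat.strong_induction_on with
  | _ n ih =>
    intro hn L
    rcases Nat.lt_or_ge n 2 with h2 | h2
    · -- n = 1
      have hn1 : n = 1 := by omega
      subst hn1
      rw [FA_one]
      simp only [Finset.mem_singleton]
      constructor
      · rintro rfl; simp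
      · rintro ⟨hall, hprod⟩
        cases L with
        | nil => rfl
        | cons p L' =>
          exfalso
          have h1 : 2 ≤ p.1 := (hall p (by simp)).1
          have : p.1 ∣ 1 := by
            rw [← hprod, List.map_cons, List.prod_cons]; exact Dvd.intro _ rfl
          have := Nat.le_of_dvd one_pos this
          omega
    · rw [FA_ge_two l n h2]
      simp only [Finset.mem_biUnion, Finset.mem_attach, true_and, Finset.mem_image,
        Subtype.exists, Finset.mem_product, Finset.mem_filter, Nat.mem_divisors,
        Finset.mem_range]
      constructor
      · rintro ⟨dc, hdc, L', hL', rfl⟩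
        obtain ⟨⟨⟨hdvd, hn0⟩, hd2⟩, hcl⟩ := hdc
        have hdpos : 0 < dc.1 := by omega
        have hq : 1 ≤ n / dc.1 := Nat.one_le_div_iff hdpos |>.mpr (Nat.le_of_dvd (by omega) hdvd)
        have hlt : n / dc.1 < n := Nat.div_lt_self (by omega) (by omega)
        obtain ⟨hall, hprod⟩ := (ih _ hlt hq L').mp hL'
        refine ⟨?_, ?_⟩
        · rintro p hp
          rcases List.mem_cons.mp hp with rfl | hp
          · exact ⟨hd2, hcl⟩
          · exact hall p hp
        · simp only [List.map_cons, List.prod_cons, hprod]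
          exact Nat.mul_div_cancel' hdvd
      · rintro ⟨hall, hprod⟩
        cases L with
        | nil => simp at hprod; omega
        | cons p L' =>
          have hp1 : 2 ≤ p.1 := (hall p (by simp)).1
          have hp2 : p.2 < l := (hall p (by simp)).2
          simp only [List.map_cons, List.prod_cons] at hprod
          have hdvd : p.1 ∣ n := ⟨_, hprod.symm⟩
          have hq : n / p.1 = (L'.map Prod.fst).prod := by
            rw [← hprod, Nat.mul_div_cancel_left _ (by omega)]
          have hppos : 0 < (L'.map Prod.fst).prod := by
            apply List.prod_pos
            intro x hx
            obtain ⟨q, hqmem, rfl⟩ := List.mem_map.mp hx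
            have := (hall q (List.mem_cons_of_mem _ hqmem)).1
            omega
          have hqpos : 1 ≤ n / p.1 := by rw [hq]; exact hppos
          have hlt : n / p.1 < n := Nat.div_lt_self (by omega) (by omega)
          refine ⟨p, ⟨⟨⟨hdvd, by omega⟩, hp1⟩, hp2⟩, L', ?_, rfl⟩
          exact (ih _ hlt hqpos L').mpr ⟨fun q hq => hall q (by simp [hq]), hq.symm⟩



lemma FA_card_ge_two (l n : ℕ) (hn : 2 ≤ n) :
    (FA l n).card = ∑ dc ∈ (n.divisors.filter (fun d => 2 ≤ d)) ×ˢ Finset.range l,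
      (FA l (n / dc.1)).card := by
  rw [FA_ge_two l n hn]
  rw [Finset.card_biUnion (by
    intro x _ y _ hxy
    simp only [Finset.disjoint_left, Finset.mem_image]
    rintro L ⟨L1, _, rfl⟩ ⟨L2, _, hL2⟩
    apply hxy
    have := (List.cons.injEq _ _ _ _).mp hL2
    exact Subtype.ext this.1.symm)]
  rw [← Finset.sum_attach ((n.divisors.filter (fun d => 2 ≤ d)) ×ˢ Finset.range l)
    (fun dc => (FA l (n / dc.1)).card)]
  exact Finset.sum_congr rfl fun dc _ =>
    Finset.card_image_of_injective _ (fun a b h => by simpa using h)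

lemma FA_card_squarefree (l : ℕ) : ∀ n, Squarefree n → 1 ≤ n →
    (FA l n).card = bfun l n.primeFactors.card := by
  intro n
  induction n using Nat.strong_induction_on with
  | _ n ih =>
    intro hsq hn
    rcases Nat.lt_or_ge n 2 with h2 | h2
    · have hn1 : n = 1 := by omega
      subst hn1
      simp [FA_one, bfun_zero]
    · set P := n.primeFactors with hP
      set m := P.card with hm
      have hn0 : n ≠ 0 := by omega
      have hm1 : 1 ≤ m := by
        have : P.Nonempty := Nat.nonempty_primeFactors.mpr (by omega)
        simpa [hm] using Finset.card_pos.mpr this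
      obtain ⟨m', hm'⟩ : ∃ m', m = m' + 1 := ⟨m - 1, by omega⟩
      rw [FA_card_ge_two l n h2, Finset.sum_product]
      have hstep1 : ∀ d ∈ n.divisors.filter (fun d => 2 ≤ d),
          ∑ _c ∈ Finset.range l, (FA l (n / d)).card
            = l * bfun l (m - d.primeFactors.card) := by
        intro d hd
        obtain ⟨hdmem, hd2⟩ := Finset.mem_filter.mp hd
        obtain ⟨hdvd, -⟩ := Nat.mem_divisors.mp hdmem
        have hqdvd : n / d ∣ n := Nat.div_dvd_of_dvd hdvd
        have hqsq : Squarefree (n / d) := hsq.squarefree_of_dvd hqdvd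
        have hq1 : 1 ≤ n / d := Nat.one_le_div_iff (by omega) |>.mpr (Nat.le_of_dvd (by omega) hdvd)
        have hqlt : n / d < n := Nat.div_lt_self (by omega) (by omega)
        rw [Finset.sum_const, Finset.card_range, ih _ hqlt hqsq hq1, smul_eq_mul]
        congr 2
        -- (n / d).primeFactors.card = m - d.primeFactors.card
        have hdsub : d.primeFactors ⊆ P := Nat.primeFactors_mono hdvd hn0
        have hdsq : Squarefree d := hsq.squarefree_of_dvd hdvd
        have h1 : (∏ p ∈ P \ d.primeFactors, p) = n / ∏ p ∈ d.primeFactors, p :=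
          Nat.prod_primeFactors_sdiff_of_squarefree hsq hdsub
        rw [Nat.prod_primeFactors_of_squarefree hdsq] at h1
        have h2' : (n / d).primeFactors = P \ d.primeFactors := by
          rw [← h1, Nat.primeFactors_prod
            (fun p hp => Nat.prime_of_mem_primeFactors (Finset.mem_sdiff.mp hp).1)]
        rw [h2', Finset.card_sdiff_of_subset hdsub]
      rw [Finset.sum_congr rfl hstep1, ← Finset.mul_sum]
      -- now reindex divisors by subsets of P
      have hbij : ∑ d ∈ n.divisors.filter (fun d => 2 ≤ d), bfun l (m - d.primeFactors.card)
          = ∑ S ∈ P.powerset.erase ∅, bfun l (m - S.card) := by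
        refine (Finset.sum_nbij' (fun d => d.primeFactors) (fun S => ∏ p ∈ S, p)
          ?_ ?_ ?_ ?_ ?_).symm.symm
        · intro d hd
          obtain ⟨hdmem, hd2⟩ := Finset.mem_filter.mp hd
          obtain ⟨hdvd, -⟩ := Nat.mem_divisors.mp hdmem
          rw [Finset.mem_erase, Finset.mem_powerset]
          refine ⟨?_, Nat.primeFactors_mono hdvd hn0⟩
          have : d.primeFactors.Nonempty := Nat.nonempty_primeFactors.mpr (by omega)
          exact Finset.nonempty_iff_ne_empty.mp this
        · intro S hS
          obtain ⟨hSne, hSsub⟩ := Finset.mem_erase.mp hS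
          rw [Finset.mem_powerset] at hSsub
          have hprime : ∀ p ∈ S, p.Prime := fun p hp =>
            Nat.prime_of_mem_primeFactors (hSsub hp)
          have hdvd : (∏ p ∈ S, p) ∣ n := by
            calc (∏ p ∈ S, p) ∣ ∏ p ∈ P, p :=
                  Finset.prod_dvd_prod_of_subset _ _ _ hSsub
            _ = n := Nat.prod_primeFactors_of_squarefree hsq
          obtain ⟨p, hp⟩ := Finset.nonempty_iff_ne_empty.mpr hSne
          have hppr := hprime p hp
          have h2le : 2 ≤ ∏ q ∈ S, q := by
            have hpd : p ∣ ∏ q ∈ S, q := Finset.dvd_prod_of_mem _ hp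
            have hpos : 0 < ∏ q ∈ S, q :=
              Finset.prod_pos (fun q hq => (hprime q hq).pos)
            have := Nat.le_of_dvd hpos hpd
            have := hppr.two_le
            omega
          exact Finset.mem_filter.mpr ⟨Nat.mem_divisors.mpr ⟨hdvd, hn0⟩, h2le⟩
        · intro d hd
          obtain ⟨hdmem, hd2⟩ := Finset.mem_filter.mp hd
          obtain ⟨hdvd, -⟩ := Nat.mem_divisors.mp hdmem
          exact Nat.prod_primeFactors_of_squarefree (hsq.squarefree_of_dvd hdvd)
        · intro S hS
          obtain ⟨hSne, hSsub⟩ := Finset.mem_erase.mp hS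
          rw [Finset.mem_powerset] at hSsub
          exact Nat.primeFactors_prod (fun p hp => Nat.prime_of_mem_primeFactors (hSsub hp))
        · intro d hd
          rfl
      rw [hbij]
      -- evaluate the subset sum
      have hpow : ∑ S ∈ P.powerset, bfun l (m - S.card)
          = bfun l m + ∑ S ∈ P.powerset.erase ∅, bfun l (m - S.card) := by
        rw [← Finset.add_sum_erase _ _ (Finset.empty_mem_powerset P)]
        simp
      have hpow2 : ∑ S ∈ P.powerset, bfun l (m - S.card)
          = bfun l m + ∑ j ∈ Finset.range m, m.choose (j+1) * bfun l (m - (j+1)) := by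
        rw [Finset.sum_powerset_apply_card (fun j => bfun l (m - j)), ← hm]
        rw [Finset.sum_range_succ']
        simp [smul_eq_mul, Nat.add_comm]
      have key : ∑ S ∈ P.powerset.erase ∅, bfun l (m - S.card)
          = ∑ j ∈ Finset.range m, m.choose (j+1) * bfun l (m - (j+1)) := by
        have := hpow.symm.trans hpow2
        exact Nat.add_left_cancel this
      rw [key, hm']
      rw [bfun_succ]
      congr 1
      refine Finset.sum_congr rfl fun j hj => ?_
      congr 2
      omega

lemma nodup_of_squarefree {l n : ℕ} (hn : Squarefree n) (L : List (ℕ × ℕ))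
    (hall : ∀ p ∈ L, 2 ≤ p.1 ∧ p.2 < l) (hprod : (L.map Prod.fst).prod = n) :
    L.Nodup := by
  by_contra hnd
  obtain ⟨p, hp⟩ := List.exists_duplicate_iff_not_nodup.mpr hnd
  have hsub : List.Sublist [p, p] L := List.duplicate_iff_sublist.mp hp
  have hsub2 : List.Sublist [p.1, p.1] (L.map Prod.fst) := by
    have := hsub.map Prod.fst
    simpa using this
  have hdvd : p.1 * p.1 ∣ n := by
    have := hsub2.prod_dvd_prod
    simpa [hprod] using this
  have := hn p.1 hdvd
  have h2 : 2 ≤ p.1 := (hall p hp.mem).1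
  have := Nat.le_of_dvd one_pos this.dvd -- IsUnit p.1 → p.1 ∣ 1
  omega


theorem tA_tB_squarefree (l m n : ℕ) (hl : 1 ≤ l) (hm : 1 ≤ m)
    (hn : Squarefree n) (hcard : n.primeFactors.card = m) :
    tA l n = ∑ k ∈ Finset.Icc 1 m, l ^ k * k.factorial * stirling2 m k ∧
    tB l n = ∑ k ∈ Finset.Icc 1 m, l ^ k * k.factorial * stirling2 m k := by
  have hn1 : 1 ≤ n := Nat.pos_of_ne_zero hn.ne_zero
  have hsetA : {L : List (ℕ × ℕ) |
      (∀ p ∈ L, 2 ≤ p.1 ∧ p.2 < l) ∧ (L.map Prod.fst).prod = n} = ↑(FA l n) := by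
    ext L
    rw [Set.mem_setOf_eq, Finset.mem_coe, FA_spec l n hn1 L]
  have hAcard : tA l n = (FA l n).card := by
    rw [tA, hsetA, Set.ncard_coe_finset]
  have hBA : tB l n = tA l n := by
    rw [tB, tA]
    congr 1
    ext L
    simp only [Set.mem_setOf_eq, and_iff_right_iff_imp]
    exact fun h => nodup_of_squarefree hn L h.1 h.2
  have hval : tA l n = bfun l m := by
    rw [hAcard, FA_card_squarefree l n hn hn1, hcard]
  have hrhs : bfun l m = ∑ k ∈ Finset.Icc 1 m, l ^ k * k.factorial * stirling2 m k := by
    rw [bfun]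
    rw [← Finset.sum_subset (by
        intro k hk
        simp only [Finset.mem_Icc] at hk
        simp only [Finset.mem_range]
        omega : Finset.Icc 1 m ⊆ Finset.range (m + 1))
      (by
        intro k hk hnk
        simp only [Finset.mem_range] at hk
        simp only [Finset.mem_Icc] at hnk
        have hk0 : k = 0 := by omega
        subst hk0
        simp only [Tst_zero_right, if_neg (by omega : ¬ m = 0)]
        simp)]
    exact Finset.sum_congr rfl fun k _ => by rw [Tst]; ring
  exact ⟨hval.trans hrhs, hBA.trans (hval.trans hrhs)⟩
end

section
/- For l ≥ 1, the sequence (Ã_l(n))_{n≥1} of numbers of ordered l-colored factorizations (with Ã_l(1) = 1) is the Dirichlet inverse of the sequence c_l given by c_l(1) = 1 and c_l(n) = -l for n ≥ 2; equivalently, for all n ≥ 2, Σ_{d|n} c_l(d) · Ã_l(n/d) = 0. -/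
def S (l n : ℕ) : Set (List (ℕ × ℕ)) :=
  {L | (∀ p ∈ L, 2 ≤ p.1 ∧ p.2 < l) ∧ (L.map Prod.fst).prod = n}

lemma prod_ne_one {l : ℕ} {L : List (ℕ × ℕ)} (h : ∀ p ∈ L, 2 ≤ p.1 ∧ p.2 < l)
    (hne : L ≠ []) : 2 ≤ (L.map Prod.fst).prod := by
  induction L with
  | nil => simp at hne
  | cons a t ih =>
    have ha := h a (by simp)
    have : 1 ≤ (t.map Prod.fst).prod := by
      refine Nat.one_le_iff_ne_zero.mpr ?_
      refine List.prod_ne_zero ?_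
      intro h0
      simp only [List.mem_map] at h0
      obtain ⟨p, hp, hp0⟩ := h0
      have := h p (by simp [hp])
      omega
    simp only [List.map_cons, List.prod_cons]
    calc 2 = 2 * 1 := by ring
    _ ≤ a.1 * (t.map Prod.fst).prod := Nat.mul_le_mul ha.1 this

lemma S_one (l : ℕ) : S l 1 = {[]} := by
  ext L
  simp only [S, Set.mem_setOf_eq, Set.mem_singleton_iff]
  constructor
  · rintro ⟨h1, h2⟩
    by_contra hne
    have := prod_ne_one h1 hne
    omega
  · rintro rfl; simp

lemma S_zero (l : ℕ) : S l 0 = ∅ := by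
  ext L
  simp only [S, Set.mem_setOf_eq, Set.mem_empty_iff_false, iff_false]
  rintro ⟨h1, h2⟩
  have : (L.map Prod.fst).prod ≠ 0 := by
    refine List.prod_ne_zero ?_
    intro h0
    simp only [List.mem_map] at h0
    obtain ⟨p, hp, hp0⟩ := h0
    have := h1 p hp
    omega
  exact this h2

lemma S_decomp (l n : ℕ) (hn : 2 ≤ n) :
    S l n = ⋃ p ∈ ((n.divisors.filter (· ≠ 1)) ×ˢ Finset.range l : Finset (ℕ × ℕ)),
      (fun L => p :: L) '' S l (n / p.1) := by
  ext L
  simp only [Set.mem_iUnion, Finset.mem_coe, Finset.mem_product, Finset.mem_filter,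
    Nat.mem_divisors, Finset.mem_range, Set.mem_image, exists_prop]
  constructor
  · intro hL
    obtain ⟨h1, h2⟩ := hL
    match L with
    | [] => simp at h2; omega
    | a :: t =>
      have ha := h1 a (by simp)
      refine ⟨a, ⟨⟨⟨⟨?_, by omega⟩, by omega⟩, ha.2⟩, t, ⟨?_, ?_⟩, rfl⟩⟩
      · have h2' := h2
        simp only [List.map_cons, List.prod_cons] at h2'
        exact ⟨_, h2'.symm⟩
      · exact fun p hp => h1 p (by simp [hp])
      · simp only [List.map_cons, List.prod_cons] at h2
        rw [← h2]
        exact (Nat.mul_div_cancel_left _ (by omega)).symm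
  · rintro ⟨p, ⟨⟨⟨⟨hd, hn0⟩, hp1⟩, hpl⟩, t, ⟨ht1, ht2⟩, rfl⟩⟩
    have hp2 : 2 ≤ p.1 := by
      rcases Nat.lt_or_ge p.1 2 with h | h
      · interval_cases h' : p.1 <;> omega
      · exact h
    constructor
    · rintro q hq
      rcases List.mem_cons.mp hq with rfl | hq
      · exact ⟨hp2, hpl⟩
      · exact ht1 q hq
    · simp only [List.map_cons, List.prod_cons, ht2]
      exact Nat.mul_div_cancel' hd

lemma S_finite (l n : ℕ) : (S l n).Finite := by
  induction n using Nat.strong_induction_on with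
  | _ n ih =>
    match n with
    | 0 => rw [S_zero]; exact Set.finite_empty
    | 1 => rw [S_one]; exact Set.finite_singleton _
    | (m + 2) =>
      rw [S_decomp l (m + 2) (by omega)]
      refine Set.Finite.biUnion (Finset.finite_toSet _) ?_
      rintro p hp
      refine Set.Finite.image _ (ih _ ?_)
      refine Nat.div_lt_self (by omega) ?_
      simp only [Finset.mem_coe, Finset.mem_product, Finset.mem_filter, Nat.mem_divisors] at hp
      have h1 := Nat.pos_of_dvd_of_pos hp.1.1.1 (by omega)
      have h2 := hp.1.2
      omega

lemma ncard_recurrence (l n : ℕ) (hn : 2 ≤ n) :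
    (S l n).ncard = ∑ d ∈ n.divisors.filter (· ≠ 1), l * (S l (n / d)).ncard := by
  classical
  set F : Finset (ℕ × ℕ) := (n.divisors.filter (· ≠ 1)) ×ˢ Finset.range l with hF
  set T : ℕ × ℕ → Finset (List (ℕ × ℕ)) :=
    fun p => Finset.image (fun L => p :: L) (S_finite l (n / p.1)).toFinset with hT
  have hset : S l n = ↑(F.biUnion T) := by
    rw [S_decomp l n hn, Finset.coe_biUnion]
    refine Set.iUnion₂_congr fun p hp => ?_
    rw [hT]
    simp only [Finset.coe_image, Set.Finite.coe_toFinset]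
  have hdisj : ∀ p ∈ F, ∀ q ∈ F, p ≠ q → Disjoint (T p) (T q) := by
    intro p _ q _ hpq
    rw [Finset.disjoint_left]
    intro L hLp hLq
    simp only [hT, Finset.mem_image] at hLp hLq
    obtain ⟨a, _, rfl⟩ := hLp
    obtain ⟨b, _, hb⟩ := hLq
    exact hpq (by injection hb with h1 _; exact h1.symm)
  rw [hset, Set.ncard_coe_finset, Finset.card_biUnion hdisj]
  have hcard : ∀ p : ℕ × ℕ, (T p).card = (S l (n / p.1)).ncard := by
    intro p
    rw [hT]
    rw [Finset.card_image_of_injective _ (fun a b h => by injection h)]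
    exact (Set.ncard_eq_toFinset_card _ (S_finite l (n / p.1))).symm
  calc ∑ p ∈ F, (T p).card = ∑ p ∈ F, (S l (n / p.1)).ncard := by
        exact Finset.sum_congr rfl fun p _ => hcard p
    _ = ∑ d ∈ n.divisors.filter (· ≠ 1), ∑ _c ∈ Finset.range l, (S l (n / d)).ncard := by
        rw [hF, Finset.sum_product]
    _ = ∑ d ∈ n.divisors.filter (· ≠ 1), l * (S l (n / d)).ncard := by
        refine Finset.sum_congr rfl fun d _ => ?_
        rw [Finset.sum_const, Finset.card_range, smul_eq_mul]

lemma tA_eq (l n : ℕ) : tA l n = (S l n).ncard := rfl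

theorem tA_dirichlet_inverse (l : ℕ) (hl : 1 ≤ l) :
    tA l 1 = 1 ∧
    ∀ n : ℕ, 2 ≤ n →
      ∑ d ∈ n.divisors, (if d = 1 then 1 else (-(l : ℤ))) * (tA l (n / d) : ℤ) = 0 := by
  constructor
  · rw [tA_eq, S_one, Set.ncard_singleton]
  · intro n hn
    classical
    have hsplit := Finset.sum_filter_add_sum_filter_not n.divisors (· = 1)
      (fun d => (if d = 1 then 1 else (-(l : ℤ))) * (tA l (n / d) : ℤ))
    have h1 : n.divisors.filter (· = 1) = {1} := by
      ext d
      simp only [Finset.mem_filter, Nat.mem_divisors, Finset.mem_singleton]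
      constructor
      · exact fun h => h.2
      · rintro rfl; exact ⟨⟨one_dvd _, by omega⟩, rfl⟩
    have hflt : n.divisors.filter (fun d => ¬ d = 1) = n.divisors.filter (· ≠ 1) := rfl
    rw [← hsplit, h1, hflt]
    have hrec := ncard_recurrence l n hn
    rw [← tA_eq] at hrec
    have hrec' : (tA l n : ℤ) = ∑ d ∈ n.divisors.filter (· ≠ 1), (l : ℤ) * (tA l (n / d) : ℤ) := by
      rw [hrec]
      push_cast
      refine Finset.sum_congr rfl fun d _ => by rw [← tA_eq]
    simp only [Finset.sum_singleton, if_pos rfl, Nat.div_one, one_mul]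
    have : ∑ d ∈ n.divisors.filter (· ≠ 1), (if d = 1 then 1 else (-(l : ℤ))) * (tA l (n / d) : ℤ)
        = -∑ d ∈ n.divisors.filter (· ≠ 1), (l : ℤ) * (tA l (n / d) : ℤ) := by
      rw [← Finset.sum_neg_distrib]
      refine Finset.sum_congr rfl fun d hd => ?_
      rw [if_neg (Finset.mem_filter.mp hd).2]
      ring
    rw [this, hrec']
    simp
end

section
/- For every l ≥ 1, the arithmetic function a_l counting unordered factorizations into parts ≥ 2 using exactly l colors equals the l-fold Dirichlet convolution of f̄ with itself, where f̄(1) = 0 and f̄(n) = f(n) for n ≥ 2 with f(n) the number of unordered factorizations of n into parts ≥ 2. -/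
/-- Number of unordered factorizations of `n` into parts `≥ 2`
(multisets of integers `≥ 2` with product `n`); `ufac 1 = 1`. -/
noncomputable def ufac (n : ℕ) : ℕ :=
  Set.ncard {s : Multiset ℕ | (∀ d ∈ s, 2 ≤ d) ∧ s.prod = n}

/-- `aExact l n`: number of unordered factorizations of `n` into parts `≥ 2`
using exactly `l` colors (every color in `{0,…,l-1}` occurs). -/
noncomputable def aExact (l n : ℕ) : ℕ :=
  Set.ncard {s : Multiset (ℕ × ℕ) |
    (∀ p ∈ s, 2 ≤ p.1 ∧ p.2 < l) ∧ (∀ c < l, ∃ p ∈ s, p.2 = c) ∧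
    (s.map Prod.fst).prod = n}

/-- Dirichlet convolution of two arithmetic functions. -/
def dconv (g h : ℕ → ℕ) (n : ℕ) : ℕ :=
  ∑ d ∈ n.divisors, g d * h (n / d)

/-- `dirPow g l` : the `l`-fold Dirichlet convolution of `g` with itself,
with `dirPow g 1 = g`. -/
def dirPow (g : ℕ → ℕ) : ℕ → ℕ → ℕ
  | 0 => fun n => if n = 1 then 1 else 0
  | 1 => g
  | (l + 2) => dconv (dirPow g (l + 1)) g



lemma ncard_sprod {α β : Type*} (s : Set α) (t : Set β) :
    (s ×ˢ t).ncard = s.ncard * t.ncard := by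
  rw [← Nat.card_coe_set_eq, ← Nat.card_coe_set_eq, ← Nat.card_coe_set_eq,
    ← Nat.card_prod]
  exact Nat.card_congr (Equiv.Set.prod s t)

lemma multiset_finite {α : Type*} [DecidableEq α] (A : Finset α) (k : ℕ) :
    {s : Multiset α | (∀ x ∈ s, x ∈ A) ∧ Multiset.card s ≤ k}.Finite := by
  apply Set.Finite.subset ((k • A.val).powerset.toFinset : Finset (Multiset α)).finite_toSet
  intro s hs
  rw [Finset.mem_coe, Multiset.mem_toFinset, Multiset.mem_powerset, Multiset.le_iff_count]
  intro a
  by_cases ha : a ∈ s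
  · calc Multiset.count a s ≤ Multiset.card s := Multiset.count_le_card a s
      _ ≤ k := hs.2
      _ ≤ k * Multiset.count a (A.val) := by
          have : 1 ≤ Multiset.count a A.val := by
            rw [Nat.one_le_iff_ne_zero, Ne, Multiset.count_eq_zero]
            simpa using hs.1 a ha
          nlinarith
      _ = Multiset.count a (k • A.val) := (Multiset.count_nsmul a k A.val).symm
  · simp [Multiset.count_eq_zero.2 ha]

lemma card_le_of_prod {s : Multiset ℕ} (h2 : ∀ x ∈ s, 2 ≤ x) {n : ℕ}
    (hp : s.prod = n) (hn : 1 ≤ n) : Multiset.card s ≤ n := by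
  have h := Multiset.pow_card_le_prod (s := s) (a := 2) h2
  rw [hp] at h
  calc Multiset.card s ≤ 2 ^ Multiset.card s := Nat.lt_two_pow_self.le
    _ ≤ n := h

lemma Fb_finite (n : ℕ) (hn : 1 ≤ n) :
    {s : Multiset ℕ | (∀ x ∈ s, 2 ≤ x) ∧ s.prod = n}.Finite := by
  apply Set.Finite.subset (multiset_finite (Finset.range (n+1)) n)
  rintro s ⟨h2, hp⟩
  refine ⟨fun x hx => ?_, card_le_of_prod h2 hp hn⟩
  have : x ∣ n := hp ▸ Multiset.dvd_prod hx
  simpa [Nat.lt_succ_iff] using Nat.le_of_dvd hn this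

lemma A_finite (l n : ℕ) (hn : 1 ≤ n) :
    {s : Multiset (ℕ × ℕ) | (∀ p ∈ s, 2 ≤ p.1 ∧ p.2 < l) ∧
      (s.map Prod.fst).prod = n}.Finite := by
  apply Set.Finite.subset (multiset_finite (Finset.range (n+1) ×ˢ Finset.range l) n)
  rintro s ⟨h2, hp⟩
  constructor
  · intro p hp'
    have hd : p.1 ∣ n := hp ▸ Multiset.dvd_prod (Multiset.mem_map_of_mem _ hp')
    have := (h2 p hp')
    simp only [Finset.mem_product, Finset.mem_range, Nat.lt_succ_iff]
    exact ⟨Nat.le_of_dvd hn hd, this.2⟩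
  · have := card_le_of_prod (s := s.map Prod.fst)
      (fun x hx => by obtain ⟨p, hp', rfl⟩ := Multiset.mem_map.1 hx; exact (h2 p hp').1) hp hn
    simpa using this

def Fb (n : ℕ) : Set (Multiset ℕ) :=
  {s : Multiset ℕ | (∀ x ∈ s, 2 ≤ x) ∧ s ≠ 0 ∧ s.prod = n}

lemma Fb_finite' (n : ℕ) (hn : 1 ≤ n) : (Fb n).Finite :=
  (Fb_finite n hn).subset (fun s hs => ⟨hs.1, hs.2.2⟩)

lemma fbar_eq (n : ℕ) (hn : 1 ≤ n) :
    (if n = 1 then 0 else ufac n) = (Fb n).ncard := by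
  rcases eq_or_ne n 1 with rfl | h1
  · simp only [if_pos rfl]
    have : Fb 1 = ∅ := by
      ext s
      simp only [Fb, Set.mem_setOf_eq, Set.mem_empty_iff_false, iff_false]
      rintro ⟨h2, hne, hp⟩
      obtain ⟨x, hx⟩ := Multiset.exists_mem_of_ne_zero hne
      have : x ∣ 1 := hp ▸ Multiset.dvd_prod hx
      have := Nat.le_of_dvd one_pos this
      have := h2 x hx
      omega
    simp [this]
  · rw [if_neg h1, ufac]
    congr 1
    ext s
    simp only [Fb, Set.mem_setOf_eq]
    constructor
    · rintro ⟨h2, hp⟩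
      refine ⟨h2, ?_, hp⟩
      rintro rfl
      simp at hp
      omega
    · rintro ⟨h2, _, hp⟩; exact ⟨h2, hp⟩

def Ae (l n : ℕ) : Set (Multiset (ℕ × ℕ)) :=
  {s : Multiset (ℕ × ℕ) |
    (∀ p ∈ s, 2 ≤ p.1 ∧ p.2 < l) ∧ (∀ c < l, ∃ p ∈ s, p.2 = c) ∧
    (s.map Prod.fst).prod = n}

lemma base_case (n : ℕ) : (Ae 1 n).ncard = (Fb n).ncard := by
  have himg : Ae 1 n = (fun t : Multiset ℕ => t.map (fun x => (x, 0))) '' Fb n := by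
    ext s
    constructor
    · rintro ⟨h2, hc, hp⟩
      refine ⟨s.map Prod.fst, ⟨?_, ?_, hp⟩, ?_⟩
      · intro x hx
        obtain ⟨p, hp', rfl⟩ := Multiset.mem_map.1 hx
        exact (h2 p hp').1
      · obtain ⟨p, hps, -⟩ := hc 0 one_pos
        intro h0
        rw [Multiset.map_eq_zero] at h0
        exact absurd (h0 ▸ hps) (Multiset.notMem_zero p)
      · show Multiset.map (fun x => (x, 0)) (Multiset.map Prod.fst s) = s
        rw [Multiset.map_map]
        have : ∀ p ∈ s, ((fun x => (x, 0)) ∘ Prod.fst) p = id p := by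
          rintro ⟨a, b⟩ hp'
          have := (h2 _ hp').2
          simp only [Function.comp_apply, id_eq]
          have hb : b = 0 := by omega
          rw [hb]
        rw [Multiset.map_congr rfl this, Multiset.map_id]
    · rintro ⟨t, ⟨h2, hne, hp⟩, rfl⟩
      refine ⟨?_, ?_, ?_⟩
      · intro p hp'
        obtain ⟨x, hx, rfl⟩ := Multiset.mem_map.1 hp'
        exact ⟨h2 x hx, Nat.lt_one_iff.2 rfl⟩
      · intro c hc
        interval_cases c
        obtain ⟨x, hx⟩ := Multiset.exists_mem_of_ne_zero hne
        exact ⟨(x, 0), Multiset.mem_map_of_mem _ hx, rfl⟩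
      · rw [Multiset.map_map]
        have he : Prod.fst ∘ (fun x : ℕ => (x, 0)) = id := rfl
        rw [he, Multiset.map_id]
        exact hp
  rw [himg]
  apply Set.ncard_image_of_injOn
  intro a _ b _ hab
  exact Multiset.map_injective (fun x y hxy => (Prod.mk.injEq _ _ _ _ ▸ hxy).1) hab

lemma ncard_biUnion {α β : Type*} (t : Finset α) (S : α → Set β)
    (hfin : ∀ a ∈ t, (S a).Finite)
    (hdisj : ∀ a ∈ t, ∀ b ∈ t, a ≠ b → Disjoint (S a) (S b)) :
    (⋃ a ∈ t, S a).ncard = ∑ a ∈ t, (S a).ncard := by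
  classical
  induction t using Finset.induction_on with
  | empty => simp
  | @insert a s hx ih =>
    rw [Finset.sum_insert hx, ← ih (fun b hb => hfin b (Finset.mem_insert_of_mem hb))
      (fun b hb c hc => hdisj b (Finset.mem_insert_of_mem hb) c (Finset.mem_insert_of_mem hc))]
    rw [Finset.set_biUnion_insert]
    apply Set.ncard_union_eq
    · rw [Set.disjoint_iUnion_right]
      intro b
      rw [Set.disjoint_iUnion_right]
      intro hb
      exact hdisj a (Finset.mem_insert_self a s) b (Finset.mem_insert_of_mem hb)
        (fun h => hx (h ▸ hb))
    · exact hfin a (Finset.mem_insert_self a s)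
    · exact Set.Finite.biUnion s.finite_toSet
        (fun b hb => hfin b (Finset.mem_insert_of_mem hb))

def phi (l : ℕ) (s : Multiset (ℕ × ℕ)) : Multiset (ℕ × ℕ) × Multiset ℕ :=
  (s.filter (fun p => ¬ p.2 = l), (s.filter (fun p => p.2 = l)).map Prod.fst)

lemma recover (l : ℕ) (s : Multiset (ℕ × ℕ)) :
    (phi l s).1 + ((phi l s).2).map (fun m => (m, l)) = s := by
  show s.filter _ + (Multiset.map _ _).map _ = s
  rw [Multiset.map_map]
  have h : ∀ p ∈ s.filter (fun p : ℕ × ℕ => p.2 = l),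
      ((fun m => (m, l)) ∘ Prod.fst) p = id p := by
    intro p hp
    have := (Multiset.mem_filter.1 hp).2
    simp only [Function.comp_apply, id_eq]
    exact Prod.ext rfl this.symm
  rw [Multiset.map_congr rfl h, Multiset.map_id, add_comm]
  exact Multiset.filter_add_not _ s

lemma phi_inj (l : ℕ) : Function.Injective (phi l) := by
  intro s1 s2 h
  rw [← recover l s1, ← recover l s2, h]

lemma prod_split (l : ℕ) (s : Multiset (ℕ × ℕ)) :
    (s.map Prod.fst).prod =
      (((phi l s).1).map Prod.fst).prod * ((phi l s).2).prod := by
  conv_lhs => rw [← recover l s]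
  rw [Multiset.map_add, Multiset.prod_add, Multiset.map_map]
  have he : Prod.fst ∘ (fun m : ℕ => (m, l)) = id := rfl
  rw [he, Multiset.map_id]

lemma step (l n : ℕ) (hl : 1 ≤ l) (hn : 1 ≤ n) :
    (Ae (l+1) n).ncard = ∑ d ∈ n.divisors, (Ae l d).ncard * (Fb (n / d)).ncard := by
  classical
  set Sd : ℕ → Set (Multiset (ℕ × ℕ)) := fun d =>
    {s | s ∈ Ae (l+1) n ∧ (((phi l s).1).map Prod.fst).prod = d} with hSd
  -- the union decomposition
  have hunion : Ae (l+1) n = ⋃ d ∈ n.divisors, Sd d := by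
    ext s
    simp only [Set.mem_iUnion, hSd, Set.mem_setOf_eq]
    constructor
    · intro hs
      refine ⟨(((phi l s).1).map Prod.fst).prod, ?_, hs, rfl⟩
      rw [Nat.mem_divisors]
      exact ⟨⟨((phi l s).2).prod, by rw [← hs.2.2, prod_split l s]⟩, by omega⟩
    · rintro ⟨d, _, hs, _⟩; exact hs
  -- image identification
  have himg : ∀ d ∈ n.divisors, phi l '' Sd d = Ae l d ×ˢ Fb (n / d) := by
    intro d hd
    have hd0 : 0 < d := Nat.pos_of_mem_divisors hd
    have hdvd : d ∣ n := (Nat.mem_divisors.1 hd).1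
    ext ⟨a, b⟩
    simp only [Set.mem_image, Set.mem_prod]
    constructor
    · rintro ⟨s, ⟨⟨h2, hc, hp⟩, hprod⟩, hphi⟩
      have ha : a = (phi l s).1 := (congrArg Prod.fst hphi).symm
      have hb : b = (phi l s).2 := (congrArg Prod.snd hphi).symm
      subst ha; subst hb
      have hbprod : ((phi l s).2).prod = n / d := by
        have := prod_split l s
        rw [hp, hprod] at this
        rw [this, Nat.mul_div_cancel_left _ hd0]
      refine ⟨⟨?_, ?_, hprod⟩, ?_, ?_, hbprod⟩
      · intro p hp'
        have hps := Multiset.mem_filter.1 hp'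
        have := h2 p hps.1
        have hne := hps.2
        exact ⟨this.1, by omega⟩
      · intro c hc'
        obtain ⟨p, hps, hpc⟩ := hc c (by omega)
        exact ⟨p, Multiset.mem_filter.2 ⟨hps, by omega⟩, hpc⟩
      · intro x hx
        obtain ⟨p, hp', rfl⟩ := Multiset.mem_map.1 hx
        exact (h2 p (Multiset.mem_filter.1 hp').1).1
      · -- b ≠ 0
        obtain ⟨p, hps, hpc⟩ := hc l (Nat.lt_succ_self l)
        intro h0
        have hpf : p ∈ Multiset.filter (fun p : ℕ × ℕ => p.2 = l) s :=
          Multiset.mem_filter.2 ⟨hps, hpc⟩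
        have hmem : p.1 ∈ (phi l s).2 := Multiset.mem_map_of_mem _ hpf
        rw [h0] at hmem
        exact Multiset.notMem_zero _ hmem
    · rintro ⟨⟨ha2, hac, hap⟩, hb2, hbne, hbp⟩
      have hfa : Multiset.filter (fun p : ℕ × ℕ => ¬ p.2 = l)
          (a + b.map (fun m => (m, l))) = a := by
        rw [Multiset.filter_add]
        have h1 : Multiset.filter (fun p : ℕ × ℕ => ¬ p.2 = l) a = a :=
          Multiset.filter_eq_self.2 (fun p hp => by have := (ha2 p hp).2; omega)
        have h2 : Multiset.filter (fun p : ℕ × ℕ => ¬ p.2 = l)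
            (b.map (fun m => (m, l))) = 0 := by
          rw [Multiset.filter_eq_nil]
          intro p hp
          obtain ⟨m, _, rfl⟩ := Multiset.mem_map.1 hp
          simp
        rw [h1, h2, add_zero]
      have hfb : Multiset.filter (fun p : ℕ × ℕ => p.2 = l)
          (a + b.map (fun m => (m, l))) = b.map (fun m => (m, l)) := by
        rw [Multiset.filter_add]
        have h1 : Multiset.filter (fun p : ℕ × ℕ => p.2 = l) a = 0 := by
          rw [Multiset.filter_eq_nil]
          intro p hp
          have := (ha2 p hp).2
          omega
        have h2 : Multiset.filter (fun p : ℕ × ℕ => p.2 = l)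
            (b.map (fun m => (m, l))) = b.map (fun m => (m, l)) := by
          apply Multiset.filter_eq_self.2
          intro p hp
          obtain ⟨m, _, rfl⟩ := Multiset.mem_map.1 hp
          rfl
        rw [h1, h2, zero_add]
      have hmapb : Multiset.map Prod.fst (b.map (fun m => (m, l))) = b := by
        rw [Multiset.map_map]
        have he : Prod.fst ∘ (fun m : ℕ => (m, l)) = id := rfl
        rw [he, Multiset.map_id]
      have hphi : phi l (a + b.map (fun m => (m, l))) = (a, b) := by
        show (_, _) = (a, b)
        rw [hfa, hfb, hmapb]
      refine ⟨a + b.map (fun m => (m, l)), ⟨⟨?_, ?_, ?_⟩, ?_⟩, hphi⟩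
      · intro p hp
        rcases Multiset.mem_add.1 hp with h | h
        · exact ⟨(ha2 p h).1, by have := (ha2 p h).2; omega⟩
        · obtain ⟨m, hm, rfl⟩ := Multiset.mem_map.1 h
          exact ⟨hb2 m hm, Nat.lt_succ_self l⟩
      · intro c hc
        rcases Nat.lt_succ_iff_lt_or_eq.1 hc with h | rfl
        · obtain ⟨p, hp, hpc⟩ := hac c h
          exact ⟨p, Multiset.mem_add.2 (Or.inl hp), hpc⟩
        · obtain ⟨m, hm⟩ := Multiset.exists_mem_of_ne_zero hbne
          exact ⟨(m, c), Multiset.mem_add.2 (Or.inr (Multiset.mem_map_of_mem _ hm)), rfl⟩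
      · rw [Multiset.map_add, Multiset.prod_add, hmapb, hap, hbp]
        exact Nat.mul_div_cancel' hdvd
      · show (Multiset.map Prod.fst (phi l _).1).prod = d
        rw [show (phi l (a + b.map (fun m => (m, l)))).1 = a from congrArg Prod.fst hphi, hap]
  rw [hunion, ncard_biUnion]
  · apply Finset.sum_congr rfl
    intro d hd
    rw [← ncard_sprod, ← himg d hd, Set.ncard_image_of_injOn ((phi_inj l).injOn)]
  · intro d hd
    apply (A_finite (l+1) n hn).subset
    rintro s ⟨⟨h2, _, hp⟩, _⟩
    exact ⟨h2, hp⟩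
  · intro d1 h1 d2 h2 hne
    rw [Set.disjoint_left]
    rintro s ⟨_, hs1⟩ ⟨_, hs2⟩
    exact hne (hs1 ▸ hs2 ▸ rfl)


lemma aExact_eq_Ae (l n : ℕ) : aExact l n = (Ae l n).ncard := rfl

theorem aExact_eq_dirichlet_power (l : ℕ) (hl : 1 ≤ l) :
    ∀ n : ℕ, 1 ≤ n →
      aExact l n = dirPow (fun m => if m = 1 then 0 else ufac m) l n := by
  induction l, hl using Nat.le_induction with
  | base =>
    intro n hn
    rw [aExact_eq_Ae, base_case n]
    exact (fbar_eq n hn).symm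
  | succ l hl ih =>
    intro n hn
    rw [aExact_eq_Ae, step l n hl hn]
    have hdp : dirPow (fun m => if m = 1 then 0 else ufac m) (l+1)
        = dconv (dirPow (fun m => if m = 1 then 0 else ufac m) l)
            (fun m => if m = 1 then 0 else ufac m) := by
      obtain ⟨k, rfl⟩ : ∃ k, l = k + 1 := ⟨l - 1, by omega⟩
      rfl
    rw [hdp, dconv]
    apply Finset.sum_congr rfl
    intro d hd
    have hd0 : 0 < d := Nat.pos_of_mem_divisors hd
    have hdvd := (Nat.mem_divisors.1 hd).1
    have hnd : 1 ≤ n / d := Nat.div_pos (Nat.le_of_dvd (by omega) hdvd) hd0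
    rw [← ih d hd0, aExact_eq_Ae, ← fbar_eq (n / d) hnd]
end

section
/- For n ≥ 2, the Möbius function μ(n) equals the number of ordered factorizations of n into an even number of parts ≥ 2 minus the number of ordered factorizations of n into an odd number of parts ≥ 2, i.e., μ(n) = Σ_{k≥1} (-1)^k f̃_k(n). -/
/-- `tf k n`: number of ordered factorizations of `n` into exactly `k` parts `≥ 2`
(lists of length `k` of integers `≥ 2` with product `n`). -/
noncomputable def tf (k n : ℕ) : ℕ :=
  Set.ncard {L : List ℕ | L.length = k ∧ (∀ d ∈ L, 2 ≤ d) ∧ L.prod = n}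

/-- `Ω n`: the number of prime factors of `n` counted with multiplicity. -/
def bigOmega (n : ℕ) : ℕ := n.primeFactorsList.length

open Finset

/-- Finset version of the set counted by `tf`. -/
def Ftf : ℕ → ℕ → Finset (List ℕ)
  | 0, n => if n = 1 then {([] : List ℕ)} else ∅
  | (k+1), n => (n.divisors.erase n).biUnion fun e => (Ftf k e).image fun T => (n / e) :: T

lemma two_le_div {n e : ℕ} (hn0 : n ≠ 0) (he : e ∣ n) (hen : e ≠ n) : 2 ≤ n / e := by
  have h1 : n / e * e = n := Nat.div_mul_cancel he
  have h0 : n / e ≠ 0 := by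
    intro h; rw [h, zero_mul] at h1; exact hn0 h1.symm
  have hne1 : n / e ≠ 1 := by
    intro h; rw [h, one_mul] at h1; exact hen h1
  exact (Nat.two_le_iff _).mpr ⟨h0, hne1⟩

lemma mem_Ftf (k : ℕ) : ∀ (n : ℕ) (L : List ℕ),
    L ∈ Ftf k n ↔ (L.length = k ∧ (∀ d ∈ L, 2 ≤ d) ∧ L.prod = n) := by
  induction k with
  | zero =>
    intro n L
    simp only [Ftf]
    split_ifs with h
    · subst h
      simp only [Finset.mem_singleton]
      constructor
      · rintro rfl; simp
      · rintro ⟨h1, -, -⟩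
        exact List.length_eq_zero_iff.mp h1
    · simp only [Finset.notMem_empty, false_iff]
      rintro ⟨h1, -, h3⟩
      obtain rfl := List.length_eq_zero_iff.mp h1
      simp at h3
      exact h h3.symm
  | succ k ih =>
    intro n L
    simp only [Ftf, Finset.mem_biUnion, Finset.mem_image, Nat.mem_divisors, Finset.mem_erase]
    constructor
    · rintro ⟨e, ⟨hen, he, hn0⟩, T, hT, rfl⟩
      obtain ⟨hlen, hge, hprod⟩ := (ih e T).mp hT
      have h1 : n / e * e = n := Nat.div_mul_cancel he
      have hd2 : 2 ≤ n / e := two_le_div hn0 he hen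
      refine ⟨by simp [hlen], ?_, by rw [List.prod_cons, hprod, h1]⟩
      intro d hd
      rcases List.mem_cons.mp hd with rfl | hd
      · exact hd2
      · exact hge d hd
    · rintro ⟨hlen, hge, hprod⟩
      cases L with
      | nil => simp at hlen
      | cons d T =>
        have hTlen : T.length = k := by simpa using hlen
        have hd2 : 2 ≤ d := hge d List.mem_cons_self
        have hTge : ∀ x ∈ T, 2 ≤ x := fun x hx => hge x (List.mem_cons_of_mem d hx)
        rw [List.prod_cons] at hprod
        have epos : 0 < T.prod := List.prod_pos fun x hx => by have := hTge x hx; omega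
        have hdvd : T.prod ∣ n := ⟨d, by rw [mul_comm]; exact hprod.symm⟩
        have hlt : T.prod < n := by
          have h2 : 2 * T.prod ≤ d * T.prod := Nat.mul_le_mul_right _ hd2
          omega
        have hn0 : n ≠ 0 := by omega
        have hdiv : n / T.prod = d := by
          rw [← hprod, Nat.mul_div_cancel _ epos]
        exact ⟨T.prod, ⟨Nat.ne_of_lt hlt, hdvd, hn0⟩, T,
          (ih _ T).mpr ⟨hTlen, hTge, rfl⟩, by rw [hdiv]⟩

lemma tf_eq_card (k n : ℕ) : tf k n = (Ftf k n).card := by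
  have : {L : List ℕ | L.length = k ∧ (∀ d ∈ L, 2 ≤ d) ∧ L.prod = n} = ↑(Ftf k n) := by
    ext L
    simp [mem_Ftf]
  rw [tf, this, Set.ncard_coe_finset]

lemma tf_one {n : ℕ} (hn : 2 ≤ n) : tf 1 n = 1 := by
  rw [tf_eq_card]
  have : Ftf 1 n = {[n]} := by
    ext L
    rw [mem_Ftf, Finset.mem_singleton]
    constructor
    · rintro ⟨h1, h2, h3⟩
      cases L with
      | nil => simp at h1
      | cons d T =>
        have : T = [] := List.length_eq_zero_iff.mp (by simpa using h1)
        subst this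
        simp at h3
        rw [h3]
    · rintro rfl
      refine ⟨rfl, ?_, by simp⟩
      intro d hd; simp at hd; omega
  rw [this, Finset.card_singleton]

lemma tf_of_one {k : ℕ} (hk : 1 ≤ k) : tf k 1 = 0 := by
  rw [tf_eq_card, Finset.card_eq_zero, Finset.eq_empty_iff_forall_notMem]
  intro L hL
  rw [mem_Ftf] at hL
  obtain ⟨h1, h2, h3⟩ := hL
  cases L with
  | nil => rw [← h1] at hk; simp at hk
  | cons d T =>
    have hd2 : 2 ≤ d := h2 d List.mem_cons_self
    have hdvd : d ∣ (d :: T).prod := List.dvd_prod List.mem_cons_self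
    rw [h3] at hdvd
    have := Nat.le_of_dvd one_pos hdvd
    omega

lemma bigOmega_eq (n : ℕ) : bigOmega n = ArithmeticFunction.cardFactors n :=
  (ArithmeticFunction.cardFactors_apply).symm

lemma bigOmega_mul {m k : ℕ} (hm : m ≠ 0) (hk : k ≠ 0) :
    bigOmega (m * k) = bigOmega m + bigOmega k := by
  simp only [bigOmega_eq]
  exact ArithmeticFunction.cardFactors_mul hm hk

lemma bigOmega_pos {n : ℕ} (hn : 2 ≤ n) : 1 ≤ bigOmega n := by
  obtain ⟨p, hp, hpd⟩ := Nat.exists_prime_and_dvd (by omega : n ≠ 1)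
  have hmem : p ∈ n.primeFactorsList :=
    (Nat.mem_primeFactorsList (by omega)).mpr ⟨hp, hpd⟩
  exact List.length_pos_iff.mpr (List.ne_nil_of_mem hmem)

lemma length_le_bigOmega : ∀ (L : List ℕ), (∀ d ∈ L, 2 ≤ d) → L.length ≤ bigOmega L.prod := by
  intro L
  induction L with
  | nil => intro _; simp
  | cons d T ih =>
    intro h
    have hd2 : 2 ≤ d := h d List.mem_cons_self
    have hT : ∀ x ∈ T, 2 ≤ x := fun x hx => h x (List.mem_cons_of_mem d hx)
    have epos : 0 < T.prod := List.prod_pos fun x hx => by have := hT x hx; omega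
    rw [List.prod_cons, bigOmega_mul (by omega) (by omega), List.length_cons]
    have h1 : 1 ≤ bigOmega d := bigOmega_pos hd2
    have h2 := ih hT
    omega

lemma tf_eq_zero {k n : ℕ} (h : bigOmega n < k) : tf k n = 0 := by
  rw [tf_eq_card, Finset.card_eq_zero, Finset.eq_empty_iff_forall_notMem]
  intro L hL
  rw [mem_Ftf] at hL
  obtain ⟨h1, h2, h3⟩ := hL
  have := length_le_bigOmega L h2
  rw [h3, h1] at this
  omega

lemma bigOmega_lt {n e : ℕ} (hn0 : n ≠ 0) (he : e ∣ n) (hen : e ≠ n) :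
    bigOmega e < bigOmega n := by
  have e0 : e ≠ 0 := by rintro rfl; exact hn0 (Nat.eq_zero_of_zero_dvd he)
  have h1 : e * (n / e) = n := Nat.mul_div_cancel' he
  have hd2 : 2 ≤ n / e := two_le_div hn0 he hen
  have := bigOmega_pos hd2
  rw [← h1, bigOmega_mul e0 (by omega)]
  omega

lemma tf_succ_rec {k n : ℕ} : tf (k+1) n = ∑ e ∈ n.divisors.erase n, tf k e := by
  rw [tf_eq_card]
  show (Ftf (k+1) n).card = _
  rw [Ftf, Finset.card_biUnion]
  · refine Finset.sum_congr rfl fun e _ => ?_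
    rw [Finset.card_image_of_injective _ (fun a b h => by simpa using h), tf_eq_card]
  · intro e he e' he' hee
    rw [Function.onFun, Finset.disjoint_left]
    intro L hL hL'
    simp only [Finset.mem_image] at hL hL'
    obtain ⟨T, hT, rfl⟩ := hL
    obtain ⟨T', hT', hc⟩ := hL'
    have h1 : T.prod = e := ((mem_Ftf k e T).mp hT).2.2
    have h2 : T'.prod = e' := ((mem_Ftf k e' T').mp hT').2.2
    have hTT : T' = T := (List.cons.injEq _ _ _ _ ▸ hc).2
    exact hee (by rw [← h1, ← hTT, h2])

lemma sum_trunc {K m : ℕ} (h : bigOmega m ≤ K) :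
    ∑ k ∈ Finset.Icc 1 K, (-1 : ℤ)^k * (tf k m : ℤ)
      = ∑ k ∈ Finset.Icc 1 (bigOmega m), (-1 : ℤ)^k * (tf k m : ℤ) := by
  refine (Finset.sum_subset (Finset.Icc_subset_Icc_right h) ?_).symm
  intro k hk hk'
  simp only [Finset.mem_Icc] at hk hk'
  have : bigOmega m < k := by omega
  rw [tf_eq_zero this]
  simp

lemma sum_Icc_one (K : ℕ) (f : ℕ → ℤ) :
    ∑ k ∈ Finset.Icc 1 K, f k = ∑ i ∈ Finset.range K, f (i + 1) := by
  rw [← Finset.Ico_add_one_right_eq_Icc, Finset.sum_Ico_eq_sum_range]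
  refine Finset.sum_congr (by congr 1) fun i _ => by rw [Nat.add_comm]

theorem moebius_eq_alternating_sum_tf (n : ℕ) (hn : 2 ≤ n) :
    (ArithmeticFunction.moebius n : ℤ) =
      ∑ k ∈ Finset.Icc 1 (bigOmega n), (-1) ^ k * (tf k n : ℤ) := by
  induction n using Nat.strong_induction_on with
  | _ n ih =>
  have hn0 : n ≠ 0 := by omega
  have hΩ : 1 ≤ bigOmega n := bigOmega_pos hn
  set K := bigOmega n - 1 with hK
  have hKn : bigOmega n = K + 1 := by omega
  set E := n.divisors.erase n with hE
  -- step 1: peel off the k = 1 term and shift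
  have h1 : ∑ k ∈ Finset.Icc 1 (bigOmega n), (-1 : ℤ) ^ k * (tf k n : ℤ)
      = (∑ i ∈ Finset.range K, (-1 : ℤ) ^ (i + 2) * (tf (i + 2) n : ℤ)) + (-1) := by
    rw [sum_Icc_one, hKn, Finset.sum_range_succ']
    refine congrArg₂ (· + ·) rfl ?_
    show (-1 : ℤ) ^ (0 + 1) * (tf (0 + 1) n : ℤ) = -1
    rw [show (0:ℕ) + 1 = 1 from rfl, tf_one hn]; norm_num
  -- step 2: apply the recursion and swap sums
  have h2 : ∑ i ∈ Finset.range K, (-1 : ℤ) ^ (i + 2) * (tf (i + 2) n : ℤ)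
      = -∑ e ∈ E, ∑ k ∈ Finset.Icc 1 K, (-1 : ℤ) ^ k * (tf k e : ℤ) := by
    have step : ∀ i, (-1 : ℤ) ^ (i + 2) * (tf (i + 2) n : ℤ)
        = ∑ e ∈ E, -((-1 : ℤ) ^ (i + 1) * (tf (i + 1) e : ℤ)) := by
      intro i
      rw [show i + 2 = (i + 1) + 1 by omega, tf_succ_rec]
      push_cast
      rw [Finset.mul_sum]
      exact Finset.sum_congr rfl fun e _ => by ring
    calc ∑ i ∈ Finset.range K, (-1 : ℤ) ^ (i + 2) * (tf (i + 2) n : ℤ)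
        = ∑ i ∈ Finset.range K, ∑ e ∈ E, -((-1 : ℤ) ^ (i + 1) * (tf (i + 1) e : ℤ)) :=
          Finset.sum_congr rfl fun i _ => step i
      _ = ∑ e ∈ E, ∑ i ∈ Finset.range K, -((-1 : ℤ) ^ (i + 1) * (tf (i + 1) e : ℤ)) :=
          Finset.sum_comm
      _ = -∑ e ∈ E, ∑ k ∈ Finset.Icc 1 K, (-1 : ℤ) ^ k * (tf k e : ℤ) := by
          rw [← Finset.sum_neg_distrib]
          refine Finset.sum_congr rfl fun e _ => ?_
          rw [← Finset.sum_neg_distrib, sum_Icc_one]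
  -- step 3: evaluate the inner sums
  have h3 : ∀ e ∈ E, ∑ k ∈ Finset.Icc 1 K, (-1 : ℤ) ^ k * (tf k e : ℤ)
      = (ArithmeticFunction.moebius e : ℤ) - (if e = 1 then 1 else 0) := by
    intro e he
    obtain ⟨hen, hed⟩ := Finset.mem_erase.mp he
    rw [Nat.mem_divisors] at hed
    have hepos : 0 < e := Nat.pos_of_dvd_of_pos hed.1 (by omega)
    by_cases h1 : e = 1
    · subst h1
      rw [Finset.sum_eq_zero]
      · norm_num [ArithmeticFunction.moebius_apply_one]
      · intro k hk
        rw [tf_of_one (Finset.mem_Icc.mp hk).1]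
        simp
    · have he2 : 2 ≤ e := by omega
      have hlt : bigOmega e < bigOmega n := bigOmega_lt hn0 hed.1 hen
      have heK : bigOmega e ≤ K := by omega
      have helt : e < n := Nat.lt_of_le_of_ne (Nat.le_of_dvd (by omega) hed.1) hen
      rw [sum_trunc heK, ← ih e helt he2, if_neg h1]
      ring
  -- step 4: Möbius sum over divisors is zero
  have h4 : (ArithmeticFunction.moebius n : ℤ) + ∑ e ∈ E, (ArithmeticFunction.moebius e : ℤ) = 0 := by
    have hz := congrArg (fun f : ArithmeticFunction ℤ => f n)
      ArithmeticFunction.moebius_mul_coe_zeta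
    simp only [ArithmeticFunction.coe_mul_zeta_apply] at hz
    rw [ArithmeticFunction.one_apply_ne (by omega : n ≠ 1)] at hz
    rw [← Finset.add_sum_erase _ _ (Nat.mem_divisors_self n hn0)] at hz
    exact_mod_cast hz
  have h5 : ∑ e ∈ E, (if e = 1 then (1 : ℤ) else 0) = 1 := by
    rw [Finset.sum_ite_eq' E 1 (fun _ => (1 : ℤ))]
    rw [if_pos]
    exact Finset.mem_erase.mpr ⟨by omega, Nat.one_mem_divisors.mpr hn0⟩
  rw [h1, h2]
  have h6 : ∑ e ∈ E, ∑ k ∈ Finset.Icc 1 K, (-1 : ℤ) ^ k * (tf k e : ℤ)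
      = ∑ e ∈ E, (ArithmeticFunction.moebius e : ℤ) - 1 := by
    rw [Finset.sum_congr rfl h3, Finset.sum_sub_distrib, h5]
  rw [h6]
  linarith
end
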